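/- arXiv:2204.12419 — 4 statements merged into one kernel-verified Lean document; each statement's English description precedes it below -/
import Mathlib

section
/- Let A be a totally unimodular matrix representing a co-Eulerian regular oriented matroid, and let B_1, B_2 be bases. The simplices Δ_{B_1} = conv{a_i : i ∈ B_1} and Δ_{B_2} = conv{a_i : i ∈ B_2} intersect in a common face if and only if there is no signed circuit C = C^+ ⊔ C^- with C^+ ⊆ B_1 and C^- ⊆ B_2. -/
open Finset

def Matrix.ColDep {m n : Type*} (A : Matrix m n ℝ) (S : Finset n) : Prop :=
  ¬ LinearIndependent ℝ (fun i : S => A.transpose i.1)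

def Matrix.IsCircuit {m n : Type*} (A : Matrix m n ℝ) (C : Finset n) : Prop :=
  A.ColDep C ∧ ∀ S ⊂ C, ¬ A.ColDep S

/-- A signed circuit: a circuit `C⁺ ⊔ C⁻` with `∑_{i∈C⁺} a_i - ∑_{i∈C⁻} a_i = 0`. -/
def Matrix.IsSignedCircuit {m n : Type*} [Fintype m] [DecidableEq n]
    (A : Matrix m n ℝ) (Cp Cm : Finset n) : Prop :=
  Disjoint Cp Cm ∧ A.IsCircuit (Cp ∪ Cm) ∧
    (∑ i ∈ Cp, A.transpose i) - (∑ i ∈ Cm, A.transpose i) = 0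

section AuxProof
open Matrix
set_option linter.unusedSectionVars false
set_option linter.unusedVariables false
set_option maxHeartbeats 1000000

variable {k n : Type*} [Fintype k] [Fintype n] [DecidableEq n] (A : Matrix k n ℝ)

lemma colDep_of_combo {T : Finset n} {u : n → ℝ}
    (hsum : ∑ i ∈ T, u i • A.transpose i = 0) (hne : ∃ i ∈ T, u i ≠ 0) :
    A.ColDep T := by
  intro hli
  obtain ⟨i, hiT, hi⟩ := hne
  refine hi (Fintype.linearIndependent_iff.mp hli (fun j : T => u j.1) ?_ ⟨i, hiT⟩)
  rw [show (∑ j : T, u j.1 • A.transpose j.1) = ∑ j ∈ T, u j • A.transpose j from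
    Finset.sum_coe_sort T (fun j => u j • A.transpose j)]
  exact hsum

lemma exists_combo_of_colDep {T : Finset n} (h : A.ColDep T) :
    ∃ u : n → ℝ, (∀ i, i ∉ T → u i = 0) ∧ (∃ i ∈ T, u i ≠ 0) ∧
      ∑ i ∈ T, u i • A.transpose i = 0 := by
  classical
  obtain ⟨g, hg, i, hi⟩ := Fintype.not_linearIndependent_iff.mp h
  refine ⟨fun j => if hj : j ∈ T then g ⟨j, hj⟩ else 0,
    fun j hj => dif_neg hj, ⟨i.1, i.2, by simp [i.2, hi]⟩, ?_⟩
  rw [← Finset.sum_coe_sort T (fun j => (if hj : j ∈ T then g ⟨j, hj⟩ else 0) • A.transpose j)]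
  simpa using hg

lemma exists_circuit_subset {T : Finset n} (h : A.ColDep T) :
    ∃ C ⊆ T, A.IsCircuit C := by
  classical
  have hne : (T.powerset.filter (fun S => A.ColDep S)).Nonempty :=
    ⟨T, by simp [h]⟩
  obtain ⟨C, hC, hmin⟩ := Finset.exists_min_image _ Finset.card hne
  simp only [Finset.mem_filter, Finset.mem_powerset] at hC
  refine ⟨C, hC.1, hC.2, fun S hS hSdep => ?_⟩
  have hSm : S ∈ T.powerset.filter (fun S => A.ColDep S) := by
    simp only [Finset.mem_filter, Finset.mem_powerset]
    exact ⟨hS.subset.trans hC.1, hSdep⟩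
  exact absurd (Finset.card_lt_card hS) (not_lt.mpr (hmin S hSm))

lemma linearIndependent_subset {B C : Finset n}
    (hB : LinearIndependent ℝ (fun i : B => A.transpose i.1)) (hCB : C ⊆ B) :
    LinearIndependent ℝ (fun i : C => A.transpose i.1) :=
  hB.comp (fun i : C => (⟨i.1, hCB i.2⟩ : B))
    (fun a b hab => Subtype.ext (by simpa using hab))

lemma exists_unit_submatrix {D : Finset n}
    (hD : LinearIndependent ℝ (fun i : D => A.transpose i.1)) :
    ∃ r : D → k, IsUnit (A.submatrix r (fun d : D => (d : n))).det := by
  classical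
  set N : Matrix D k ℝ := Matrix.of (fun (d : D) (j : k) => A j d.1) with hN
  have hrows : LinearIndependent ℝ N := hD
  have hrank : N.rank = Fintype.card D := hrows.rank_matrix
  have hspan : Submodule.span ℝ (Set.range N.transpose) = ⊤ := by
    apply Submodule.eq_top_of_finrank_eq
    change Module.finrank ℝ (Submodule.span ℝ (Set.range N.col)) = _
    rw [← Matrix.rank_eq_finrank_span_cols, hrank, Module.finrank_pi]
  obtain ⟨t, hts, hsp, hli⟩ := exists_linearIndependent ℝ (Set.range N.transpose)
  rw [hspan] at hsp
  have htfin : t.Finite := (Set.finite_range N.transpose).subset hts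
  have : Fintype t := htfin.fintype
  let b : Module.Basis t ℝ (D → ℝ) := Module.Basis.mk hli (by rw [Subtype.range_coe_subtype, Set.setOf_mem_eq, hsp])
  have hcard : Fintype.card D = Fintype.card t := by
    rw [← Module.finrank_eq_card_basis b, Module.finrank_pi]
  let e : D ≃ t := Fintype.equivOfCardEq hcard
  have hpre : ∀ d : D, ∃ j : k, N.transpose j = (e d : D → ℝ) := fun d => hts (e d).2
  choose r hr using hpre
  refine ⟨r, ?_⟩
  have hQ : IsUnit (A.transpose.submatrix (fun d : D => (d : n)) r) := by
    rw [← Matrix.linearIndependent_cols_iff_isUnit]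
    have : (fun d : D => (A.transpose.submatrix (fun d : D => (d : n)) r).transpose d)
        = fun d : D => ((e d : t) : D → ℝ) := by
      funext d
      rw [← hr d]
      rfl
    change LinearIndependent ℝ (fun d : D => (A.transpose.submatrix (fun d : D => (d : n)) r).transpose d)
    rw [this]
    exact hli.comp (fun d => e d) (fun a b hab => e.injective hab)
  have hQd : IsUnit (A.transpose.submatrix (fun d : D => (d : n)) r).det :=
    (Matrix.isUnit_iff_isUnit_det _).mp hQ
  rwa [← Matrix.det_transpose, Matrix.transpose_submatrix, Matrix.transpose_transpose] at hQd

lemma cramer_mulVec' {m : Type*} [Fintype m] [DecidableEq m]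
    (M : Matrix m m ℝ) (x : m → ℝ) : Matrix.cramer M (M *ᵥ x) = M.det • x := by
  rw [Matrix.cramer_eq_adjugate_mulVec, Matrix.mulVec_mulVec, Matrix.adjugate_mul,
    Matrix.smul_mulVec, Matrix.one_mulVec]

lemma sign_cases {s : ℝ} (hs : s ∈ Set.range SignType.cast) : s = 0 ∨ s = 1 ∨ s = -1 := by
  obtain ⟨sg, rfl⟩ := hs
  cases sg <;> simp

lemma circuit_pm (hA : A.IsTotallyUnimodular) {C : Finset n} (hC : A.IsCircuit C) :
    ∃ Cp Cm : Finset n, Cp ∪ Cm = C ∧ A.IsSignedCircuit Cp Cm := by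
  classical
  obtain ⟨u, hu0, ⟨iw, hiwC, hiw⟩, husum⟩ := exists_combo_of_colDep A hC.1
  -- every coefficient on C is nonzero
  have hall : ∀ j ∈ C, u j ≠ 0 := by
    intro j hjC hj
    refine hC.2 (C.erase j) (Finset.erase_ssubset hjC) (colDep_of_combo A ?_ ⟨iw, ?_, hiw⟩)
    · rw [Finset.sum_erase _ (by rw [hj, zero_smul])]
      exact husum
    · exact Finset.mem_erase.mpr ⟨fun h => hiw (h ▸ hj), hiwC⟩
  obtain ⟨i₀, hi₀⟩ : C.Nonempty := ⟨iw, hiwC⟩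
  have hu₀ : u i₀ ≠ 0 := hall i₀ hi₀
  set D : Finset n := C.erase i₀ with hD
  have hDind : LinearIndependent ℝ (fun i : D => A.transpose i.1) :=
    not_not.mp (hC.2 D (Finset.erase_ssubset hi₀))
  obtain ⟨r, hr⟩ := exists_unit_submatrix A hDind
  set P : Matrix D D ℝ := A.submatrix r (fun d : D => (d : n)) with hP
  set x : D → ℝ := fun d => u d.1 with hx
  set c₀ : D → ℝ := fun e => A (r e) i₀ with hc₀
  have hPx : P *ᵥ x = (-(u i₀)) • c₀ := by
    funext e
    have hrow : ∑ j ∈ C, u j * A (r e) j = 0 := by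
      have := congrFun husum (r e)
      simpa [Finset.sum_apply] using this
    have hins : C = insert i₀ D := by
      rw [hD, Finset.insert_erase hi₀]
    rw [hins, Finset.sum_insert (Finset.notMem_erase _ _)] at hrow
    have hDsum : ∑ j ∈ D, u j * A (r e) j = -(u i₀) * A (r e) i₀ := by linarith
    show ∑ d : D, P e d * x d = _
    rw [show (∑ d : D, P e d * x d) = ∑ j ∈ D, u j * A (r e) j from ?_]
    · simpa using hDsum
    · rw [← Finset.sum_coe_sort D (fun j => u j * A (r e) j)]
      apply Finset.sum_congr rfl
      intro d _
      simp [hP, hx, mul_comm]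
  have hcram : P.det • x = (-(u i₀)) • Matrix.cramer P c₀ := by
    rw [← cramer_mulVec' P x, hPx, LinearMap.map_smul]
  -- each cramer value is 0, 1, or -1
  have hcrval : ∀ d : D, (Matrix.cramer P c₀ d = 0 ∨ Matrix.cramer P c₀ d = 1 ∨
      Matrix.cramer P c₀ d = -1) := by
    intro d
    apply sign_cases
    rw [Matrix.cramer_apply]
    have : P.updateCol d c₀ =
        A.submatrix r (Function.update (fun d : D => (d : n)) d i₀) := by
      ext e d'
      by_cases h : d' = d
      · subst h; simp [Matrix.updateCol_apply, hc₀]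
      · simp [Matrix.updateCol_apply, h, hP, Function.update_apply]
    rw [this]
    exact (Matrix.isTotallyUnimodular_iff_fintype A).mp hA D r _
  have hdet : P.det = 1 ∨ P.det = -1 := by
    rcases sign_cases ((Matrix.isTotallyUnimodular_iff_fintype A).mp hA D r _) with h | h | h
    · exact absurd (h ▸ hr) (by simp)
    · exact Or.inl h
    · exact Or.inr h
  -- ratios are ±1
  have hratio : ∀ j ∈ C, u j = u i₀ ∨ u j = -u i₀ := by
    intro j hjC
    by_cases hji : j = i₀
    · exact Or.inl (by rw [hji])
    · have hjD : j ∈ D := Finset.mem_erase.mpr ⟨hji, hjC⟩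
      have h1 : P.det * u j = -(u i₀) * Matrix.cramer P c₀ ⟨j, hjD⟩ := by
        have := congrFun hcram ⟨j, hjD⟩
        simpa [hx] using this
      have huj : u j ≠ 0 := hall j hjC
      rcases hcrval ⟨j, hjD⟩ with h | h | h
      · rw [h] at h1
        rcases hdet with hd | hd <;> rw [hd] at h1 <;> simp at h1 <;> exact absurd h1 huj
      · rw [h] at h1
        rcases hdet with hd | hd <;> rw [hd] at h1
        · exact Or.inr (by linarith)
        · exact Or.inl (by linarith)
      · rw [h] at h1
        rcases hdet with hd | hd <;> rw [hd] at h1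
        · exact Or.inl (by linarith)
        · exact Or.inr (by linarith)
  -- build the signed circuit
  set Cp : Finset n := C.filter (fun j => u j = u i₀) with hCp
  set Cm : Finset n := C.filter (fun j => u j = -u i₀) with hCm
  have hunion : Cp ∪ Cm = C := by
    rw [hCp, hCm, ← Finset.filter_or]
    exact Finset.filter_true_of_mem hratio
  have hdisj : Disjoint Cp Cm := by
    rw [Finset.disjoint_left]
    intro j hjp hjm
    rw [hCp, Finset.mem_filter] at hjp
    rw [hCm, Finset.mem_filter] at hjm
    apply hu₀
    linarith [hjp.2, hjm.2]
  have h1 : ∑ i ∈ Cp, u i • A.transpose i = ∑ i ∈ Cp, u i₀ • A.transpose i := by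
    refine Finset.sum_congr rfl (fun j hj => ?_)
    rw [(Finset.mem_filter.mp hj).2]
  have h2 : ∑ i ∈ Cm, u i • A.transpose i = -∑ i ∈ Cm, u i₀ • A.transpose i := by
    rw [← Finset.sum_neg_distrib]
    refine Finset.sum_congr rfl (fun j hj => ?_)
    rw [(Finset.mem_filter.mp hj).2, neg_smul]
  have hsplit : (u i₀) • ((∑ i ∈ Cp, A.transpose i) - ∑ i ∈ Cm, A.transpose i) = 0 := by
    have hCsum : (0:k → ℝ) = (∑ i ∈ Cp, u i • A.transpose i) + ∑ i ∈ Cm, u i • A.transpose i := by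
      rw [← Finset.sum_union hdisj, hunion, husum]
    have h2' : ∑ i ∈ Cm, u i₀ • A.transpose i = -∑ i ∈ Cm, u i • A.transpose i := by
      rw [h2, neg_neg]
    rw [smul_sub, Finset.smul_sum (f := A.transpose), Finset.smul_sum (f := A.transpose), ← h1, h2', sub_neg_eq_add, ← hCsum]
  have hdiff : (∑ i ∈ Cp, A.transpose i) - ∑ i ∈ Cm, A.transpose i = 0 :=
    (smul_eq_zero.mp hsplit).resolve_left hu₀
  exact ⟨Cp, Cm, hunion, hdisj, by rw [hunion]; exact hC, hdiff⟩
lemma exists_conformal_aux (hA : A.IsTotallyUnimodular) :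
    ∀ N : ℕ, ∀ v : n → ℝ, (Finset.univ.filter (fun i => v i ≠ 0)).card ≤ N → v ≠ 0 →
      (∑ i, v i • A.transpose i) = 0 →
      ∃ Cp Cm : Finset n, A.IsSignedCircuit Cp Cm ∧ (∀ i ∈ Cp, 0 < v i) ∧
        (∀ i ∈ Cm, v i < 0) := by
  classical
  intro N
  induction N with
  | zero =>
    intro v hcard hv0 _
    exfalso
    apply hv0
    funext i
    show v i = 0
    by_contra hi
    have hmem : i ∈ Finset.univ.filter (fun i => v i ≠ 0) := by simp [hi]
    have := Finset.card_pos.mpr ⟨i, hmem⟩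
    omega
  | succ N ih =>
    intro v hcard hv0 hvsum
    set supp := Finset.univ.filter (fun i => v i ≠ 0) with hsupp
    have hsuppmem : ∀ i, i ∈ supp ↔ v i ≠ 0 := by intro i; simp [hsupp]
    have hdep : A.ColDep supp := by
      refine colDep_of_combo A (u := v) ?_ ?_
      · rw [Finset.sum_subset (Finset.subset_univ _) (fun i _ hi => ?_)]
        · exact hvsum
        · have : v i = 0 := by
            by_contra h
            exact hi ((hsuppmem i).mpr h)
          rw [this, zero_smul]
      · obtain ⟨i, hi⟩ := Function.ne_iff.mp hv0
        exact ⟨i, (hsuppmem i).mpr hi, hi⟩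
    obtain ⟨C, hCsupp, hCcirc⟩ := exists_circuit_subset A hdep
    obtain ⟨Cp₀, Cm₀, hun₀, hsc₀⟩ := circuit_pm A hA hCcirc
    have hCne : C.Nonempty := by
      rcases C.eq_empty_or_nonempty with rfl | h
      · exfalso
        haveI : IsEmpty {x // x ∈ (∅ : Finset n)} := ⟨fun x => Finset.notMem_empty x.1 x.2⟩
        exact hCcirc.1 linearIndependent_empty_type
      · exact h
    have hvC : ∀ j ∈ C, v j ≠ 0 := fun j hj => (hsuppmem j).mp (hCsupp hj)
    have key : ∀ Cp Cm : Finset n, Cp ∪ Cm = C → A.IsSignedCircuit Cp Cm →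
        (∃ i ∈ C, 0 < v i * ((if i ∈ Cp then (1:ℝ) else 0) - (if i ∈ Cm then 1 else 0))) →
        (∃ Cp Cm : Finset n, A.IsSignedCircuit Cp Cm ∧ (∀ i ∈ Cp, 0 < v i) ∧
          (∀ i ∈ Cm, v i < 0)) := by
      intro Cp Cm hun hsc hex
      set w : n → ℝ := fun i => (if i ∈ Cp then (1:ℝ) else 0) - (if i ∈ Cm then 1 else 0)
        with hw
      have hwp : ∀ i ∈ Cp, w i = 1 := fun i hi => by
        have h2 : i ∉ Cm := Finset.disjoint_left.mp hsc.1 hi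
        simp [hw, hi, h2]
      have hwm : ∀ i ∈ Cm, w i = -1 := fun i hi => by
        have h2 : i ∉ Cp := Finset.disjoint_right.mp hsc.1 hi
        simp [hw, hi, h2]
      have hw0 : ∀ i, i ∉ C → w i = 0 := fun i hi => by
        rw [← hun] at hi
        have h1 : i ∉ Cp := fun h => hi (Finset.mem_union_left _ h)
        have h2 : i ∉ Cm := fun h => hi (Finset.mem_union_right _ h)
        simp [hw, h1, h2]
      have hwsq : ∀ i ∈ C, w i * w i = 1 := by
        intro i hi
        have hiun : i ∈ Cp ∪ Cm := by rw [hun]; exact hi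
        rcases Finset.mem_union.mp hiun with h | h
        · rw [hwp i h]; norm_num
        · rw [hwm i h]; norm_num
      have hwsum : ∑ i, w i • A.transpose i = 0 := by
        have hsplit : ∀ i, w i • A.transpose i =
            (if i ∈ Cp then A.transpose i else 0) - (if i ∈ Cm then A.transpose i else 0) := by
          intro i
          by_cases h1 : i ∈ Cp
          · have h2 : i ∉ Cm := Finset.disjoint_left.mp hsc.1 h1
            simp [hw, h1, h2]
          · by_cases h2 : i ∈ Cm
            · simp [hw, h1, h2]
            · simp [hw, h1, h2]
        simp_rw [hsplit]
        rw [Finset.sum_sub_distrib, Finset.sum_ite_mem Finset.univ Cp A.transpose,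
          Finset.sum_ite_mem Finset.univ Cm A.transpose,
          Finset.univ_inter, Finset.univ_inter]
        exact hsc.2.2
      set T := C.filter (fun i => 0 < v i * w i) with hT
      have hTne : T.Nonempty := by
        obtain ⟨i, hiC, hipos⟩ := hex
        exact ⟨i, Finset.mem_filter.mpr ⟨hiC, hipos⟩⟩
      obtain ⟨i₁, hi₁T, hmin⟩ := Finset.exists_min_image T (fun i => v i * w i) hTne
      set t := v i₁ * w i₁ with ht
      have hi₁C : i₁ ∈ C := (Finset.mem_filter.mp hi₁T).1
      have htpos : 0 < t := (Finset.mem_filter.mp hi₁T).2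
      set v' : n → ℝ := fun i => v i - t * w i with hv'
      have hv'zero : ∀ i, v i = 0 → v' i = 0 := by
        intro i hi
        have hiC : i ∉ C := fun h => hvC i h hi
        simp [hv', hi, hw0 i hiC]
      have hv'i₁ : v' i₁ = 0 := by
        have heq : t * w i₁ = v i₁ := by
          have h := hwsq i₁ hi₁C
          calc t * w i₁ = v i₁ * (w i₁ * w i₁) := by rw [ht]; ring
          _ = v i₁ := by rw [h, mul_one]
        simp [hv', heq]
      have hv'sum : ∑ i, v' i • A.transpose i = 0 := by
        have hm : ∀ i, (t * w i) • A.transpose i = t • (w i • A.transpose i) :=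
          fun i => mul_smul _ _ _
        simp only [hv', sub_smul]
        rw [Finset.sum_sub_distrib, hvsum]
        simp_rw [hm]
        rw [← Finset.smul_sum, hwsum, smul_zero, sub_zero]
      have hpos' : ∀ i, 0 < v' i → 0 < v i := by
        intro i hi
        rcases lt_trichotomy (v i) 0 with h | h | h
        · exfalso
          have hle : v' i ≤ 0 := by
            by_cases hiC : i ∈ C
            · have hiun : i ∈ Cp ∪ Cm := by rw [hun]; exact hiC
              rcases Finset.mem_union.mp hiun with hp | hm'
              · have hw1 : w i = 1 := hwp i hp
                simp only [hv', hw1, mul_one]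
                linarith
              · have hw1 : w i = -1 := hwm i hm'
                have hiT : i ∈ T := Finset.mem_filter.mpr ⟨hiC, by rw [hw1]; nlinarith⟩
                have hmt := hmin i hiT
                simp only [hv', hw1]
                rw [hw1] at hmt
                nlinarith
            · simp only [hv', hw0 i hiC, mul_zero, sub_zero]
              linarith
          linarith
        · exfalso
          have := hv'zero i h
          linarith
        · exact h
      have hneg' : ∀ i, v' i < 0 → v i < 0 := by
        intro i hi
        rcases lt_trichotomy (v i) 0 with h | h | h
        · exact h
        · exfalso
          have := hv'zero i h
          linarith
        · exfalso
          have hle : 0 ≤ v' i := by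
            by_cases hiC : i ∈ C
            · have hiun : i ∈ Cp ∪ Cm := by rw [hun]; exact hiC
              rcases Finset.mem_union.mp hiun with hp | hm'
              · have hw1 : w i = 1 := hwp i hp
                have hiT : i ∈ T := Finset.mem_filter.mpr ⟨hiC, by rw [hw1]; nlinarith⟩
                have hmt := hmin i hiT
                simp only [hv', hw1, mul_one]
                rw [hw1] at hmt
                nlinarith
              · have hw1 : w i = -1 := hwm i hm'
                simp only [hv', hw1]
                nlinarith
            · simp only [hv', hw0 i hiC, mul_zero, sub_zero]
              linarith
          linarith
      by_cases hzero : v' = 0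
      · have hveq : ∀ i, v i = t * w i := by
          intro i
          have h := congrFun hzero i
          simp only [hv'] at h
          have h' : v i - t * w i = 0 := h
          linarith
        refine ⟨Cp, Cm, hsc, fun i hi => ?_, fun i hi => ?_⟩
        · rw [hveq i, hwp i hi, mul_one]; exact htpos
        · rw [hveq i, hwm i hi]; linarith
      · have hsupp' : (Finset.univ.filter (fun i => v' i ≠ 0)).card ≤ N := by
          have hsub : Finset.univ.filter (fun i => v' i ≠ 0) ⊆ supp.erase i₁ := by
            intro i hi
            simp only [Finset.mem_filter, Finset.mem_univ, true_and] at hi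
            refine Finset.mem_erase.mpr ⟨fun h => hi (h ▸ hv'i₁), ?_⟩
            rw [hsuppmem]
            intro hvi
            exact hi (hv'zero i hvi)
          have h1 := Finset.card_le_card hsub
          have h2 : i₁ ∈ supp := (hsuppmem i₁).mpr (hvC i₁ hi₁C)
          have h3 := Finset.card_erase_of_mem h2
          omega
        obtain ⟨Cp', Cm', hsc', hp', hm'⟩ := ih v' hsupp' hzero hv'sum
        exact ⟨Cp', Cm', hsc', fun i hi => hpos' i (hp' i hi), fun i hi => hneg' i (hm' i hi)⟩
    obtain ⟨j, hjC⟩ := hCne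
    have hjCun : j ∈ Cp₀ ∪ Cm₀ := by rw [hun₀]; exact hjC
    have hswap : A.IsSignedCircuit Cm₀ Cp₀ := by
      refine ⟨hsc₀.1.symm, by rw [Finset.union_comm]; exact hsc₀.2.1, ?_⟩
      have h := hsc₀.2.2
      rw [sub_eq_zero] at h ⊢
      exact h.symm
    have hunswap : Cm₀ ∪ Cp₀ = C := by rw [Finset.union_comm]; exact hun₀
    rcases Finset.mem_union.mp hjCun with hp | hm
    · have hj1 : j ∉ Cm₀ := Finset.disjoint_left.mp hsc₀.1 hp
      rcases lt_or_gt_of_ne (hvC j hjC) with hneg | hposv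
      · refine key Cm₀ Cp₀ hunswap hswap ⟨j, hjC, ?_⟩
        rw [if_neg hj1, if_pos hp]
        nlinarith
      · refine key Cp₀ Cm₀ hun₀ hsc₀ ⟨j, hjC, ?_⟩
        rw [if_pos hp, if_neg hj1]
        nlinarith
    · have hj1 : j ∉ Cp₀ := Finset.disjoint_right.mp hsc₀.1 hm
      rcases lt_or_gt_of_ne (hvC j hjC) with hneg | hposv
      · refine key Cp₀ Cm₀ hun₀ hsc₀ ⟨j, hjC, ?_⟩
        rw [if_neg hj1, if_pos hm]
        nlinarith
      · refine key Cm₀ Cp₀ hunswap hswap ⟨j, hjC, ?_⟩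
        rw [if_pos hm, if_neg hj1]
        nlinarith
lemma exists_weights {B : Finset n}
    (hB : LinearIndependent ℝ (fun i : B => A.transpose i.1)) {p : k → ℝ}
    (hp : p ∈ convexHull ℝ (A.transpose '' ↑B)) :
    ∃ lam : n → ℝ, (∀ i, 0 ≤ lam i) ∧ (∀ i, i ∉ B → lam i = 0) ∧ (∑ i ∈ B, lam i = 1) ∧
      ∑ i ∈ B, lam i • A.transpose i = p := by
  classical
  rw [show A.transpose '' ↑B = ↑(B.image A.transpose) from (Finset.coe_image).symm,
    Finset.convexHull_eq] at hp
  obtain ⟨w, hw0, hw1, hwc⟩ := hp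
  have hinj : ∀ i ∈ B, ∀ j ∈ B, A.transpose i = A.transpose j → i = j := by
    intro i hi j hj hij
    have := hB.injective (a₁ := ⟨i, hi⟩) (a₂ := ⟨j, hj⟩) hij
    exact congrArg Subtype.val this
  refine ⟨fun i => if i ∈ B then w (A.transpose i) else 0, ?_, ?_, ?_, ?_⟩
  · intro i
    by_cases hi : i ∈ B
    · simp only [if_pos hi]
      exact hw0 _ (Finset.mem_image_of_mem _ hi)
    · simp [hi]
  · intro i hi; simp [hi]
  · rw [Finset.sum_congr rfl (fun i hi => if_pos hi), ← Finset.sum_image hinj]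
    exact hw1
  · have : ∑ i ∈ B, (if i ∈ B then w (A.transpose i) else 0) • A.transpose i
        = ∑ y ∈ B.image A.transpose, w y • y := by
      rw [Finset.sum_image hinj]
      exact Finset.sum_congr rfl (fun i hi => by rw [if_pos hi])
    rw [this]
    rw [Finset.centerMass_eq_of_sum_1 _ id hw1] at hwc
    simpa using hwc
  
lemma subset_of_combo_eq {B S T : Finset n}
    (hB : LinearIndependent ℝ (fun i : B => A.transpose i.1))
    (hS : S ⊆ B) (hT : T ⊆ B) {lam : n → ℝ} {c : ℝ} (hc : c ≠ 0)
    (hsum : ∑ i ∈ S, lam i • A.transpose i = ∑ i ∈ T, c • A.transpose i) :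
    T ⊆ S := by
  classical
  set g : B → ℝ := fun i => (if i.1 ∈ S then lam i.1 else 0) - (if i.1 ∈ T then c else 0)
    with hg
  have hgsum : ∑ i : B, g i • A.transpose i.1 = 0 := by
    simp only [hg, sub_smul]
    rw [Finset.sum_sub_distrib]
    have h1 : ∑ i : B, (if i.1 ∈ S then lam i.1 else 0) • A.transpose i.1
        = ∑ i ∈ S, lam i • A.transpose i := by
      rw [Finset.sum_coe_sort B (fun j => (if j ∈ S then lam j else 0) • A.transpose j)]
      rw [← Finset.sum_subset hS (fun i _ hi => by rw [if_neg hi, zero_smul])]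
      exact Finset.sum_congr rfl (fun i hi => by rw [if_pos hi])
    have h2 : ∑ i : B, (if i.1 ∈ T then c else 0) • A.transpose i.1
        = ∑ i ∈ T, c • A.transpose i := by
      rw [Finset.sum_coe_sort B (fun j => (if j ∈ T then c else 0) • A.transpose j)]
      rw [← Finset.sum_subset hT (fun i _ hi => by rw [if_neg hi, zero_smul])]
      exact Finset.sum_congr rfl (fun i hi => by rw [if_pos hi])
    rw [h1, h2, hsum, sub_self]
  have hzero := Fintype.linearIndependent_iff.mp hB g hgsum
  intro j hjT
  by_contra hjS
  have := hzero ⟨j, hT hjT⟩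
  rw [hg] at this
  simp only [if_neg hjS, if_pos hjT, zero_sub, neg_eq_zero] at this
  exact hc this

end AuxProof

/-- For a totally unimodular matrix `A` representing a co-Eulerian regular
oriented matroid and bases `B₁, B₂`, the simplices `Δ_{B₁} = conv{a_i : i ∈ B₁}` and
`Δ_{B₂} = conv{a_i : i ∈ B₂}` intersect in a common face (their intersection is the convex
hull of the columns of a common vertex subset) if and only if there is no signed circuit
`C = C⁺ ⊔ C⁻` with `C⁺ ⊆ B₁` and `C⁻ ⊆ B₂`. -/
theorem simplices_meet_in_common_face_iff
    {k n : Type*} [Fintype k] [Fintype n] [DecidableEq n]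
    (A : Matrix k n ℝ) (hA : A.IsTotallyUnimodular)
    (hco : ∀ Cp Cm : Finset n, A.IsSignedCircuit Cp Cm → Cp.card = Cm.card)
    (B₁ B₂ : Finset n)
    (hB₁ : LinearIndependent ℝ (fun i : B₁ => A.transpose i.1)) (hB₁c : B₁.card = A.rank)
    (hB₂ : LinearIndependent ℝ (fun i : B₂ => A.transpose i.1)) (hB₂c : B₂.card = A.rank) :
    (∃ S : Finset n, S ⊆ B₁ ∧ S ⊆ B₂ ∧
        convexHull ℝ (A.transpose '' B₁) ∩ convexHull ℝ (A.transpose '' B₂) =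
          convexHull ℝ (A.transpose '' S)) ↔
      ¬ ∃ Cp Cm : Finset n, A.IsSignedCircuit Cp Cm ∧ Cp ⊆ B₁ ∧ Cm ⊆ B₂ := by
  classical
  constructor
  · rintro ⟨S, hSB₁, hSB₂, hS⟩ ⟨Cp, Cm, hsc, hCpB₁, hCmB₂⟩
    have hcard := hco Cp Cm hsc
    obtain ⟨hdisj, hcirc, hsum⟩ := hsc
    have hCpne : Cp.Nonempty := by
      rw [Finset.nonempty_iff_ne_empty]
      rintro rfl
      have hCm0 : Cm = ∅ := Finset.card_eq_zero.mp (by simpa using hcard.symm)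
      rw [Finset.empty_union, hCm0] at hcirc
      haveI : IsEmpty {x // x ∈ (∅ : Finset n)} := ⟨fun x => Finset.notMem_empty x.1 x.2⟩
      exact hcirc.1 linearIndependent_empty_type
    set c : ℝ := (Cp.card : ℝ) with hc
    have hcpos : 0 < c := by
      rw [hc]
      exact_mod_cast Finset.card_pos.mpr hCpne
    have hcne : (c⁻¹ : ℝ) ≠ 0 := inv_ne_zero (ne_of_gt hcpos)
    have hsums : ∑ i ∈ Cm, A.transpose i = ∑ i ∈ Cp, A.transpose i :=
      (sub_eq_zero.mp hsum).symm
    set p : k → ℝ := ∑ i ∈ Cp, c⁻¹ • A.transpose i with hp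
    have hpp : p = c⁻¹ • ∑ i ∈ Cp, A.transpose i := by rw [hp]; exact (Finset.smul_sum ..).symm
    have hpCm : p = ∑ i ∈ Cm, c⁻¹ • A.transpose i := by
      rw [hpp, ← hsums]; exact Finset.smul_sum ..
    have hmem1 : p ∈ convexHull ℝ (A.transpose '' ↑B₁) := by
      have h := Finset.centerMass_mem_convexHull Cp (w := fun _ => (1:ℝ))
        (fun i _ => zero_le_one) (by simpa using hCpne)
        (z := A.transpose) (fun i hi => Set.mem_image_of_mem _ (hCpB₁ hi))
      rwa [show Cp.centerMass (fun _ => (1:ℝ)) A.transpose = p from ?_] at h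
      unfold Finset.centerMass
      simp only [Finset.sum_const, nsmul_eq_mul, mul_one, one_smul]
      rw [hpp, hc]
    have hmem2 : p ∈ convexHull ℝ (A.transpose '' ↑B₂) := by
      have h := Finset.centerMass_mem_convexHull Cm (w := fun _ => (1:ℝ))
        (fun i _ => zero_le_one)
        (by simpa using Finset.card_pos.mp (hcard ▸ Finset.card_pos.mpr hCpne))
        (z := A.transpose) (fun i hi => Set.mem_image_of_mem _ (hCmB₂ hi))
      rwa [show Cm.centerMass (fun _ => (1:ℝ)) A.transpose = p from ?_] at h
      unfold Finset.centerMass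
      simp only [Finset.sum_const, nsmul_eq_mul, mul_one, one_smul]
      rw [hpp, ← hsums, hc, hcard]
    have hpS : p ∈ convexHull ℝ (A.transpose '' ↑S) := by
      rw [← hS]; exact ⟨hmem1, hmem2⟩
    obtain ⟨lam, _, _, _, hlamp⟩ := exists_weights A (linearIndependent_subset A hB₁ hSB₁) hpS
    have hCpS : Cp ⊆ S := subset_of_combo_eq A hB₁ hSB₁ hCpB₁ hcne (by rw [hlamp])
    have hCmS : Cm ⊆ S := subset_of_combo_eq A hB₂ hSB₂ hCmB₂ hcne (by rw [hlamp]; exact hpCm)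
    exact hcirc.1 (linearIndependent_subset A hB₁
      (Finset.union_subset (hCpS.trans hSB₁) (hCmS.trans hSB₁)))
  · intro h
    refine ⟨B₁ ∩ B₂, Finset.inter_subset_left, Finset.inter_subset_right, ?_⟩
    apply Set.Subset.antisymm
    · rintro p ⟨hp₁, hp₂⟩
      obtain ⟨lam, hlam0, hlams, hlam1, hlamp⟩ := exists_weights A hB₁ hp₁
      obtain ⟨mu, hmu0, hmus, hmu1, hmup⟩ := exists_weights A hB₂ hp₂
      set v : n → ℝ := fun i => lam i - mu i with hv
      have hvsum : ∑ i, v i • A.transpose i = 0 := by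
        simp only [hv, sub_smul]
        rw [Finset.sum_sub_distrib,
          ← Finset.sum_subset (Finset.subset_univ B₁)
            (fun i _ hi => by rw [hlams i hi, zero_smul]),
          ← Finset.sum_subset (Finset.subset_univ B₂)
            (fun i _ hi => by rw [hmus i hi, zero_smul]),
          hlamp, hmup, sub_self]
      by_cases hv0 : v = 0
      · have hle : ∀ i, lam i = mu i := fun i => by
          have := congrFun hv0 i
          simpa [hv, sub_eq_zero] using this
        have hz : ∀ i ∈ B₁, i ∉ B₁ ∩ B₂ → lam i = 0 := by
          intro i hi1 hi
          have hi2 : i ∉ B₂ := fun h2 => hi (Finset.mem_inter.mpr ⟨hi1, h2⟩)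
          rw [hle i]
          exact hmus i hi2
        have hsum1 : ∑ i ∈ B₁ ∩ B₂, lam i = 1 := by
          rw [Finset.sum_subset Finset.inter_subset_left hz]
          exact hlam1
        have hsump : ∑ i ∈ B₁ ∩ B₂, lam i • A.transpose i = p := by
          rw [Finset.sum_subset Finset.inter_subset_left
            (fun i hi1 hi => by rw [hz i hi1 hi, zero_smul])]
          exact hlamp
        have hm := Finset.centerMass_mem_convexHull (B₁ ∩ B₂) (w := lam)
          (fun i _ => hlam0 i) (by rw [hsum1]; norm_num)
          (z := A.transpose) (fun i hi => Set.mem_image_of_mem _ (Finset.mem_coe.mpr hi))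
        rwa [show (B₁ ∩ B₂).centerMass lam A.transpose = p from (Finset.centerMass_eq_of_sum_1 _ _ hsum1).trans hsump] at hm
      · obtain ⟨Cp, Cm, hsc, hps, hms⟩ := exists_conformal_aux A hA
          (Finset.univ.filter (fun i => v i ≠ 0)).card v le_rfl hv0 hvsum
        refine absurd ⟨Cp, Cm, hsc, ?_, ?_⟩ h
        · intro i hi
          have hpos := hps i hi
          by_contra hiB
          have := hlams i hiB
          have := hmu0 i
          simp only [hv] at hpos
          linarith
        · intro i hi
          have hneg := hms i hi
          by_contra hiB
          have := hmus i hiB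
          have := hlam0 i
          simp only [hv] at hneg
          linarith
    · intro q hq
      exact ⟨convexHull_mono (Set.image_mono
          (Finset.coe_subset.mpr Finset.inter_subset_left)) hq,
        convexHull_mono (Set.image_mono
          (Finset.coe_subset.mpr Finset.inter_subset_right)) hq⟩
end

section
/- Suppose a signed circuit C = C^+ ⊔ C^- of a co-Eulerian totally unimodular matrix A satisfies C^+ ⊆ B_1 and C^- ⊆ B_2 for bases B_1, B_2. Then the point p = (1/|C^+|) sum_{i∈C^+} a_i = (1/|C^-|) sum_{i∈C^-} a_i lies in both simplices conv{a_i : i∈B_1} and conv{a_i : i∈B_2}, but the minimal face of the first simplex containing p is conv{a_i : i∈C^+} and the minimal face of the second containing p is conv{a_i : i∈C^-}, which are disjoint simplices. -/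
open Finset

lemma aux_mem {k n : Type*} [Fintype k] (A : Matrix k n ℝ) (C : Finset n) (hC : C.Nonempty) :
    ((C.card : ℝ)⁻¹ • ∑ i ∈ C, A.transpose i) ∈ convexHull ℝ (A.transpose '' ↑C) := by
  have h := Finset.centerMass_mem_convexHull C (w := fun _ => (1:ℝ)) (z := A.transpose)
    (fun i _ => zero_le_one) (by simpa using hC.card_pos) (fun i hi => Set.mem_image_of_mem _ hi)
  simpa [Finset.centerMass, smul_sum] using h

lemma aux_min {k n : Type*} [Fintype k] [Fintype n] [DecidableEq n]
    (A : Matrix k n ℝ) (B C S : Finset n)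
    (hB : LinearIndependent ℝ (fun i : B => A.transpose i.1))
    (hCB : C ⊆ B) (hCne : C.Nonempty) (hSB : S ⊆ B)
    (hp : ((C.card : ℝ)⁻¹ • ∑ i ∈ C, A.transpose i) ∈ convexHull ℝ (A.transpose '' ↑S)) :
    C ⊆ S := by
  classical
  have hinj : Set.InjOn A.transpose ↑B := by
    intro x hx y hy hxy
    have := hB.injective (a₁ := ⟨x, hx⟩) (a₂ := ⟨y, hy⟩) hxy
    exact Subtype.ext_iff.mp this
  rw [show A.transpose '' (↑S : Set n) = ↑(S.image A.transpose) from (Finset.coe_image).symm,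
    Finset.convexHull_eq] at hp
  obtain ⟨w, hw0, hw1, hwc⟩ := hp
  rw [Finset.centerMass_eq_of_sum_1 _ _ hw1] at hwc
  have hsum : ∑ y ∈ S.image A.transpose, w y • id y
      = ∑ j ∈ S, w (A.transpose j) • A.transpose j := by
    rw [Finset.sum_image (fun x hx y hy h => hinj (hSB hx) (hSB hy) h)]; rfl
  set g : ↥B → ℝ := fun i =>
    (if i.1 ∈ C then (C.card : ℝ)⁻¹ else 0) - (if i.1 ∈ S then w (A.transpose i.1) else 0) with hg
  have hzero : ∑ i : ↥B, g i • A.transpose i.1 = 0 := by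
    have h1 : ∑ i : ↥B, g i • A.transpose i.1
        = ∑ i ∈ B, ((if i ∈ C then (C.card : ℝ)⁻¹ else 0)
            - (if i ∈ S then w (A.transpose i) else 0)) • A.transpose i := by
      rw [← Finset.sum_attach B (fun i => ((if i ∈ C then (C.card : ℝ)⁻¹ else 0)
            - (if i ∈ S then w (A.transpose i) else 0)) • A.transpose i)]
      rfl
    rw [h1]
    have h2 : ∀ i ∈ B, ((if i ∈ C then (C.card : ℝ)⁻¹ else 0)
            - (if i ∈ S then w (A.transpose i) else 0)) • A.transpose i
        = (if i ∈ C then (C.card : ℝ)⁻¹ • A.transpose i else 0)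
          - (if i ∈ S then w (A.transpose i) • A.transpose i else 0) := by
      intro i _
      split_ifs <;> simp [sub_smul]
    rw [Finset.sum_congr rfl h2, Finset.sum_sub_distrib,
      Finset.sum_ite_mem, Finset.sum_ite_mem,
      Finset.inter_eq_right.mpr hCB, Finset.inter_eq_right.mpr hSB]
    rw [← hsum, hwc, show ∑ i ∈ C, (C.card : ℝ)⁻¹ • A.transpose i
      = (C.card : ℝ)⁻¹ • ∑ i ∈ C, A.transpose i from (Finset.smul_sum ..).symm]
    exact sub_self _
  have hall := Fintype.linearIndependent_iff.mp hB g hzero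
  intro i hi
  by_contra hiS
  have := hall ⟨i, hCB hi⟩
  simp only [hg, hi, if_pos, hiS, if_neg, not_false_iff, sub_zero] at this
  have h0 : (C.card : ℝ)⁻¹ = 0 := this
  have hcpos : (0:ℝ) < C.card := by exact_mod_cast hCne.card_pos
  exact absurd h0 (by positivity)

/-- Suppose a signed circuit `C = C⁺ ⊔ C⁻` of a co-Eulerian totally
unimodular matrix `A` satisfies `C⁺ ⊆ B₁`, `C⁻ ⊆ B₂` for bases `B₁, B₂`. Then the point
`p = (1/|C⁺|) ∑_{i∈C⁺} a_i = (1/|C⁻|) ∑_{i∈C⁻} a_i` lies in both simplices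
`conv{a_i : i ∈ B₁}` and `conv{a_i : i ∈ B₂}`; the minimal face of the first simplex
containing `p` is `conv{a_i : i ∈ C⁺}` and that of the second is `conv{a_i : i ∈ C⁻}`,
and these are simplices on disjoint vertex sets. -/
theorem signed_circuit_gives_conflicting_minimal_faces
    {k n : Type*} [Fintype k] [Fintype n] [DecidableEq n]
    (A : Matrix k n ℝ) (hA : A.IsTotallyUnimodular)
    (hco : ∀ Cp Cm : Finset n, A.IsSignedCircuit Cp Cm → Cp.card = Cm.card)
    (B₁ B₂ Cp Cm : Finset n)
    (hB₁ : LinearIndependent ℝ (fun i : B₁ => A.transpose i.1)) (hB₁c : B₁.card = A.rank)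
    (hB₂ : LinearIndependent ℝ (fun i : B₂ => A.transpose i.1)) (hB₂c : B₂.card = A.rank)
    (hC : A.IsSignedCircuit Cp Cm) (hCp : Cp ⊆ B₁) (hCm : Cm ⊆ B₂) :
    ((Cp.card : ℝ)⁻¹ • ∑ i ∈ Cp, A.transpose i) =
        ((Cm.card : ℝ)⁻¹ • ∑ i ∈ Cm, A.transpose i) ∧
    (let p := (Cp.card : ℝ)⁻¹ • ∑ i ∈ Cp, A.transpose i
     p ∈ convexHull ℝ (A.transpose '' B₁) ∧
     p ∈ convexHull ℝ (A.transpose '' B₂) ∧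
     p ∈ convexHull ℝ (A.transpose '' Cp) ∧
     p ∈ convexHull ℝ (A.transpose '' Cm) ∧
     (∀ S ⊆ B₁, p ∈ convexHull ℝ (A.transpose '' S) → Cp ⊆ S) ∧
     (∀ S ⊆ B₂, p ∈ convexHull ℝ (A.transpose '' S) → Cm ⊆ S) ∧
     Disjoint Cp Cm) := by
  obtain ⟨hdisj, hcirc, hsum⟩ := hC
  have hcard : Cp.card = Cm.card := hco Cp Cm ⟨hdisj, hcirc, hsum⟩
  have hsums : (∑ i ∈ Cp, A.transpose i) = ∑ i ∈ Cm, A.transpose i := sub_eq_zero.mp hsum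
  have hCpne : Cp.Nonempty := by
    by_contra h
    rw [Finset.not_nonempty_iff_eq_empty] at h
    have hm : Cm = ∅ := Finset.card_eq_zero.mp (by rw [← hcard, h, Finset.card_empty])
    apply hcirc.1
    rw [h, hm, Finset.empty_union]
    exact linearIndependent_empty_type
  have hCmne : Cm.Nonempty := Finset.card_pos.mp (hcard ▸ hCpne.card_pos)
  have hpeq : ((Cp.card : ℝ)⁻¹ • ∑ i ∈ Cp, A.transpose i)
      = ((Cm.card : ℝ)⁻¹ • ∑ i ∈ Cm, A.transpose i) := by rw [hcard, hsums]
  refine ⟨hpeq, ?_, ?_, ?_, ?_, ?_, ?_, hdisj⟩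
  · exact convexHull_mono (Set.image_mono (by exact_mod_cast hCp)) (aux_mem A Cp hCpne)
  · exact convexHull_mono (Set.image_mono (by exact_mod_cast hCm))
      (hpeq ▸ aux_mem A Cm hCmne)
  · exact aux_mem A Cp hCpne
  · exact hpeq ▸ aux_mem A Cm hCmne
  · exact fun S hS hp => aux_min A B₁ Cp S hB₁ hCp hCpne hS hp
  · exact fun S hS hp => aux_min A B₂ Cm S hB₂ hCm hCmne hS (hpeq ▸ hp)
end

section
/- Let G be a connected Eulerian digraph and v_0, v_1 any two vertices. Then the greedoid polynomial of the directed branching greedoid of G rooted at v_0 equals the greedoid polynomial of the directed branching greedoid of G rooted at v_1. -/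
open Finset

section

variable {V E : Type*}

/-- Reachability from `u` to `v` using directed edges from the edge set `F`. -/
def ReachableIn [Fintype E] (tail head : E → V) (F : Finset E) (u v : V) : Prop :=
  Relation.ReflTransGen (fun a b => ∃ e ∈ F, tail e = a ∧ head e = b) u v

/-- `F` is a spanning arborescence rooted at `v₀`. -/
def IsArborescence [Fintype V] [Fintype E] (tail head : E → V) (F : Finset E) (v₀ : V) :
    Prop :=
  (∀ v : V, ReachableIn tail head F v₀ v) ∧ F.card + 1 = Fintype.card V

open Classical in
/-- The greedoid polynomial of the directed branching greedoid of the digraph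
`(tail, head)` rooted at `v₀`, evaluated at `x`: the `h`-polynomial `f(x-1)` of the dual
complex, whose faces are the subsets of `E` disjoint from some spanning arborescence
rooted at `v₀`. -/
noncomputable def greedoidPolyEval [Fintype V] [Fintype E]
    (tail head : E → V) (v₀ : V) (x : ℝ) : ℝ :=
  ∑ X ∈ Finset.univ.filter
      (fun X : Finset E => ∃ F : Finset E, IsArborescence tail head F v₀ ∧ Disjoint X F),
    (x - 1) ^ (Fintype.card E + 1 - Fintype.card V - X.card)

namespace GPRI
set_option linter.unusedSectionVars false
open scoped Classical

variable [Fintype V] [Fintype E] (tail head : E → V)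

/-- `Y` spans the digraph from root `v`. -/
def spans (v : V) (Y : Finset E) : Prop := ∀ w, ReachableIn tail head Y v w

lemma reach_mono {Y Z : Finset E} (hYZ : Y ⊆ Z) {u w : V}
    (h : ReachableIn tail head Y u w) : ReachableIn tail head Z u w :=
  Relation.ReflTransGen.mono (r := fun a b => ∃ e ∈ Y, tail e = a ∧ head e = b)
    (p := fun a b => ∃ e ∈ Z, tail e = a ∧ head e = b)
    (fun _ _ ⟨e, he, h1, h2⟩ => ⟨e, hYZ he, h1, h2⟩) _ _ h

/-- along a compatible level function, levels weakly decrease under reachability. -/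
lemma reach_level {Y : Finset E} {f : V → ℕ}
    (hf : ∀ e ∈ Y, f (head e) ≤ f (tail e)) {u w : V}
    (h : ReachableIn tail head Y u w) : f w ≤ f u := by
  induction h with
  | refl => exact le_refl _
  | tail _ hbc ih =>
      obtain ⟨e, he, h1, h2⟩ := hbc
      exact le_trans (h2 ▸ h1 ▸ hf e he) ih

/-- if `u ∈ T`, `w ∉ T` and `w` is reachable from `u`, some edge of `Y` exits `T`. -/
lemma exists_exit {Y : Finset E} {T : Finset V} {u w : V} (hu : u ∈ T) (hw : w ∉ T)
    (h : ReachableIn tail head Y u w) : ∃ e ∈ Y, tail e ∈ T ∧ head e ∉ T := by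
  induction h with
  | refl => exact absurd hu hw
  | tail _ hbc ih =>
      classical
      rename_i b c _
      obtain ⟨e, he, h1, h2⟩ := hbc
      by_cases hb : b ∈ T
      · exact ⟨e, he, h1 ▸ hb, h2 ▸ hw⟩
      · exact ih hb

/-- a spanning edge set contains an arborescence. -/
lemma exists_arborescence {v : V} {Y : Finset E} (hY : spans tail head v Y) :
    ∃ F : Finset E, F ⊆ Y ∧ IsArborescence tail head F v := by
  classical
  suffices h : ∀ (k : ℕ) (T : Finset V) (F : Finset E), F ⊆ Y → v ∈ T →
      T.card = F.card + 1 → (∀ w ∈ T, ReachableIn tail head F v w) →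
      (∀ e ∈ F, tail e ∈ T ∧ head e ∈ T) → Fintype.card V = T.card + k →
      ∃ G, G ⊆ Y ∧ (∀ w, ReachableIn tail head G v w) ∧ G.card + 1 = Fintype.card V by
    have hpos : 1 ≤ Fintype.card V := Fintype.card_pos_iff.mpr ⟨v⟩
    obtain ⟨G, h1, h2, h3⟩ := h (Fintype.card V - 1) {v} ∅ (by simp)
      (Finset.mem_singleton_self v) (by simp)
      (by
        intro w hw
        rw [Finset.mem_singleton] at hw
        subst hw
        exact Relation.ReflTransGen.refl)
      (by simp) (by simp; omega)
    exact ⟨G, h1, h2, h3⟩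
  intro k
  induction k with
  | zero =>
    intro T F hFY hvT hcard hreach _ hn
    have hT : T = Finset.univ := Finset.eq_univ_of_card T (by simpa using hn.symm)
    exact ⟨F, hFY, fun w => hreach w (hT ▸ Finset.mem_univ w), by omega⟩
  | succ k ih =>
    intro T F hFY hvT hcard hreach hin hn
    have hex : ∃ w, w ∉ T := by
      by_contra h
      push_neg at h
      have hT : T = Finset.univ := Finset.eq_univ_iff_forall.mpr h
      rw [hT, Finset.card_univ] at hn
      omega
    obtain ⟨w, hw⟩ := hex
    obtain ⟨e, he, het, heh⟩ := exists_exit tail head hvT hw (hY w)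
    have heF : e ∉ F := fun h => heh (hin e h).2
    refine ih (insert (head e) T) (insert e F) ?_ (Finset.mem_insert_of_mem hvT) ?_ ?_ ?_ ?_
    · intro f hf
      rcases Finset.mem_insert.mp hf with rfl | hf
      · exact he
      · exact hFY hf
    · rw [Finset.card_insert_of_notMem heF, Finset.card_insert_of_notMem heh]
      omega
    · intro u hu
      rcases Finset.mem_insert.mp hu with rfl | hu
      · exact Relation.ReflTransGen.tail
          (reach_mono tail head (Finset.subset_insert e F) (hreach (tail e) het))
          ⟨e, Finset.mem_insert_self e F, rfl, rfl⟩
      · exact reach_mono tail head (Finset.subset_insert e F) (hreach u hu)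
    · intro f hf
      rcases Finset.mem_insert.mp hf with rfl | hf
      · exact ⟨Finset.mem_insert_of_mem het, Finset.mem_insert_self _ _⟩
      · exact ⟨Finset.mem_insert_of_mem (hin f hf).1, Finset.mem_insert_of_mem (hin f hf).2⟩
    · rw [Finset.card_insert_of_notMem heh]
      omega

open Classical in
/-- number of spanning subsets of a given size. -/
noncomputable def lcount (v : V) (m : ℕ) : ℕ :=
  (Finset.univ.filter (fun Y : Finset E => spans tail head v Y ∧ Y.card = m)).card

/-- the top level of a level function. -/
def maxl (ℓ : V → Fin (Fintype.card V)) : ℕ := Finset.univ.sup fun u => (ℓ u : ℕ)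

open Classical in
/-- edges compatible with a level function (head's level ≤ tail's level). -/
noncomputable def Kset (ℓ : V → Fin (Fintype.card V)) : Finset E :=
  Finset.univ.filter fun e => (ℓ (head e) : ℕ) ≤ (ℓ (tail e) : ℕ)

open Classical in
/-- admissible level functions: root at level 0, all levels below the top attained. -/
noncomputable def adm (v : V) : Finset (V → Fin (Fintype.card V)) :=
  Finset.univ.filter fun ℓ => (ℓ v : ℕ) = 0 ∧ ∀ j < maxl ℓ, ∃ u, (ℓ u : ℕ) = j

lemma maxl_le {ℓ : V → Fin (Fintype.card V)} {M : ℕ}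
    (h : ∀ u, (ℓ u : ℕ) ≤ M) : maxl ℓ ≤ M :=
  Finset.sup_le fun u _ => h u

lemma le_maxl (ℓ : V → Fin (Fintype.card V)) (u : V) : (ℓ u : ℕ) ≤ maxl ℓ :=
  Finset.le_sup (f := fun u => ((ℓ u : ℕ))) (Finset.mem_univ u)

lemma maxl_attained [Nonempty V] (ℓ : V → Fin (Fintype.card V)) :
    ∃ u, (ℓ u : ℕ) = maxl ℓ := by
  obtain ⟨u, _, hu⟩ := Finset.exists_mem_eq_sup Finset.univ univ_nonempty
    (fun u => (ℓ u : ℕ))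
  exact ⟨u, hu.symm⟩

lemma adm_attains {v : V} {ℓ : V → Fin (Fintype.card V)} (hℓ : ℓ ∈ adm v) :
    ∀ j ≤ maxl ℓ, ∃ u, (ℓ u : ℕ) = j := by
  classical
  have hv : Nonempty V := ⟨v⟩
  intro j hj
  rcases eq_or_lt_of_le hj with h | h
  · obtain ⟨u, hu⟩ := maxl_attained ℓ
    exact ⟨u, h ▸ hu⟩
  · exact ((Finset.mem_filter.mp hℓ).2).2 j h

/-- pigeonhole: all levels `≤ maxl` are attained, so `maxl < card V`. -/
lemma adm_maxl_lt {v : V} {ℓ : V → Fin (Fintype.card V)} (hℓ : ℓ ∈ adm v) :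
    maxl ℓ < Fintype.card V := by
  classical
  have h : ∀ j ∈ Finset.range (maxl ℓ + 1), ∃ u, (ℓ u : ℕ) = j := fun j hj =>
    adm_attains hℓ j (Nat.lt_succ_iff.mp (Finset.mem_range.mp hj))
  have hinj := Finset.card_le_card_of_injOn
    (s := Finset.range (maxl ℓ + 1)) (t := (Finset.univ : Finset V))
    (f := fun j => if h : ∃ u, (ℓ u : ℕ) = j then h.choose else v)
    (fun j _ => Finset.mem_univ _) ?_
  · rw [Finset.card_range, Finset.card_univ] at hinj
    omega
  · intro a ha b hb hab
    have hae := h a (Finset.mem_coe.mp ha)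
    have hbe := h b (Finset.mem_coe.mp hb)
    dsimp only at hab
    rw [dif_pos hae, dif_pos hbe] at hab
    have h1 : (ℓ hae.choose : ℕ) = a := hae.choose_spec
    have h2 : (ℓ hbe.choose : ℕ) = b := hbe.choose_spec
    rw [← h1, ← h2, hab]

/-- Key identity (any digraph): alternating sum over admissible level functions
compatible with `Y` detects whether `Y` spans from `v`. -/
lemma keyA (v : V) (Y : Finset E) :
    (∑ ℓ ∈ (adm (V := V) v).filter (fun ℓ => Y ⊆ Kset tail head ℓ),
      (-1 : ℤ) ^ (maxl ℓ)) = if spans tail head v Y then 1 else 0 := by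
  classical
  have npos : 0 < Fintype.card V := Fintype.card_pos_iff.mpr ⟨v⟩
  have hmem : ∀ ℓ : V → Fin (Fintype.card V),
      ℓ ∈ (adm (V := V) v).filter (fun ℓ => Y ⊆ Kset tail head ℓ) ↔
      (((ℓ v : ℕ) = 0 ∧ ∀ j < maxl ℓ, ∃ u, (ℓ u : ℕ) = j) ∧
        ∀ e ∈ Y, (ℓ (head e) : ℕ) ≤ (ℓ (tail e) : ℕ)) := by
    intro ℓ
    rw [Finset.mem_filter, adm, Finset.mem_filter]
    simp only [Finset.mem_univ, true_and]
    constructor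
    · rintro ⟨hadm, hsub⟩
      exact ⟨hadm, fun e he => (Finset.mem_filter.mp (hsub he)).2⟩
    · rintro ⟨hadm, hcomp⟩
      exact ⟨hadm, fun e he => Finset.mem_filter.mpr ⟨Finset.mem_univ e, hcomp e he⟩⟩
  by_cases hsp : spans tail head v Y
  · rw [if_pos hsp]
    have hset : (adm (V := V) v).filter (fun ℓ => Y ⊆ Kset tail head ℓ) =
        {fun _ => (⟨0, npos⟩ : Fin (Fintype.card V))} := by
      ext ℓ
      rw [hmem ℓ, Finset.mem_singleton]
      constructor
      · rintro ⟨⟨hv0, _⟩, hcomp⟩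
        funext u
        have hle : (ℓ u : ℕ) ≤ (ℓ v : ℕ) := reach_level tail head (f := fun u => ((ℓ u : ℕ))) hcomp (hsp u)
        exact Fin.ext (by simp only [Fin.val_mk]; omega)
      · rintro rfl
        have hm0 : maxl (fun _ : V => (⟨0, npos⟩ : Fin (Fintype.card V))) = 0 :=
          Nat.le_zero.mp (maxl_le fun u => le_refl 0)
        exact ⟨⟨rfl, fun j hj => absurd hj (by omega)⟩, fun e _ => le_refl _⟩
    rw [hset, Finset.sum_singleton]
    have hm0 : maxl (fun _ : V => (⟨0, npos⟩ : Fin (Fintype.card V))) = 0 :=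
      Nat.le_zero.mp (maxl_le fun u => le_refl 0)
    rw [hm0, pow_zero]
  · rw [if_neg hsp]
    set W : Finset V := Finset.univ.filter (fun u => ReachableIn tail head Y v u) with hWdef
    have hvW : v ∈ W := by
      simp only [hWdef, Finset.mem_filter, Finset.mem_univ, true_and]
      exact Relation.ReflTransGen.refl
    have hWclosed : ∀ e ∈ Y, tail e ∈ W → head e ∈ W := by
      intro e he ht
      simp only [hWdef, Finset.mem_filter, Finset.mem_univ, true_and] at ht ⊢
      exact Relation.ReflTransGen.tail ht ⟨e, he, rfl, rfl⟩
    obtain ⟨w₀, hw₀⟩ : ∃ w, w ∉ W := by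
      rw [spans] at hsp
      push_neg at hsp
      obtain ⟨w, hw⟩ := hsp
      exact ⟨w, by simp only [hWdef, Finset.mem_filter, Finset.mem_univ, true_and]; exact hw⟩
    -- abbreviations
    set s := (adm (V := V) v).filter (fun ℓ => Y ⊆ Kset tail head ℓ) with hsdef
    -- facts about members
    have hW0 : ∀ ℓ : V → Fin (Fintype.card V), ℓ ∈ s → ∀ u ∈ W, (ℓ u : ℕ) = 0 := by
      intro ℓ hℓ u hu
      obtain ⟨⟨hv0, _⟩, hcomp⟩ := (hmem ℓ).mp hℓ
      have hu' : ReachableIn tail head Y v u := by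
        simpa only [hWdef, Finset.mem_filter, Finset.mem_univ, true_and] using hu
      have hlev : (ℓ u : ℕ) ≤ (ℓ v : ℕ) :=
        reach_level tail head (f := fun u => ((ℓ u : ℕ))) hcomp hu'
      omega
    -- the involution
    set merge : (V → Fin (Fintype.card V)) → (V → Fin (Fintype.card V)) :=
      fun ℓ u => ⟨(ℓ u : ℕ) - 1, Nat.lt_of_le_of_lt (Nat.sub_le _ _) (ℓ u).isLt⟩
      with hmergedef
    set split : (V → Fin (Fintype.card V)) → (V → Fin (Fintype.card V)) :=
      fun ℓ u => if u ∈ W then (⟨0, npos⟩ : Fin (Fintype.card V))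
        else ⟨((ℓ u : ℕ) + 1) % Fintype.card V, Nat.mod_lt _ npos⟩
      with hsplitdef
    set ι : (V → Fin (Fintype.card V)) → (V → Fin (Fintype.card V)) :=
      fun ℓ => if (∀ u, (ℓ u : ℕ) = 0 → u ∈ W) then merge ℓ else split ℓ with hιdef
    have hmv : ∀ ℓ u, ((merge ℓ) u : ℕ) = (ℓ u : ℕ) - 1 := fun ℓ u => rfl
    have hsv : ∀ ℓ u, ((split ℓ) u : ℕ) =
        if u ∈ W then 0 else ((ℓ u : ℕ) + 1) % Fintype.card V := by
      intro ℓ u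
      by_cases hu : u ∈ W <;> simp [hsplitdef, hu]
    -- pigeonhole for the split case
    have hsplit_bound : ∀ ℓ : V → Fin (Fintype.card V), ℓ ∈ s →
        (∃ u₀, (ℓ u₀ : ℕ) = 0 ∧ u₀ ∉ W) → maxl ℓ + 1 < Fintype.card V := by
      intro ℓ hℓ ⟨u₀, hu₀0, hu₀W⟩
      have hfib : (Finset.univ : Finset V).card =
          ∑ j ∈ Finset.range (maxl ℓ + 1),
            (Finset.univ.filter (fun u => (ℓ u : ℕ) = j)).card := by
        apply Finset.card_eq_sum_card_fiberwise
        intro u _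
        exact Finset.mem_range.mpr (Nat.lt_succ_of_le (le_maxl ℓ u))
      have hone : ∀ j ∈ Finset.range (maxl ℓ + 1),
          1 + (if j = 0 then 1 else 0) ≤
            (Finset.univ.filter (fun u => (ℓ u : ℕ) = j)).card := by
        intro j hj
        rcases eq_or_ne j 0 with rfl | hj0
        · simp only [if_pos rfl]
          have hsub : ({v, u₀} : Finset V) ⊆ Finset.univ.filter (fun u => (ℓ u : ℕ) = 0) := by
            intro u hu
            rcases Finset.mem_insert.mp hu with rfl | hu
            · exact Finset.mem_filter.mpr ⟨Finset.mem_univ _, ((hmem ℓ).mp hℓ).1.1⟩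
            · rw [Finset.mem_singleton] at hu
              subst hu
              exact Finset.mem_filter.mpr ⟨Finset.mem_univ _, hu₀0⟩
          have hvu : v ≠ u₀ := fun h => hu₀W (h ▸ hvW)
          calc 1 + 1 = ({v, u₀} : Finset V).card := (Finset.card_pair hvu).symm
            _ ≤ _ := Finset.card_le_card hsub
        · simp only [if_neg hj0]
          obtain ⟨u, hu⟩ := adm_attains (Finset.mem_filter.mp hℓ |>.1) j
            (Nat.lt_succ_iff.mp (Finset.mem_range.mp hj))
          have : u ∈ Finset.univ.filter (fun u => (ℓ u : ℕ) = j) :=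
            Finset.mem_filter.mpr ⟨Finset.mem_univ _, hu⟩
          simpa using Finset.card_pos.mpr ⟨u, this⟩
      have hsum := Finset.sum_le_sum hone
      have h0mem : (0 : ℕ) ∈ Finset.range (maxl ℓ + 1) := Finset.mem_range.mpr (by omega)
      rw [← hfib, Finset.sum_add_distrib, Finset.sum_const, Finset.card_range, smul_eq_mul,
        mul_one, Finset.sum_ite_eq' (Finset.range (maxl ℓ + 1)) 0 (fun _ => 1),
        if_pos h0mem, Finset.card_univ] at hsum
      omega
    -- merge facts
    have hmerge_all : ∀ ℓ : V → Fin (Fintype.card V), ℓ ∈ s →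
        (∀ u, (ℓ u : ℕ) = 0 → u ∈ W) →
        (merge ℓ ∈ s ∧ maxl (merge ℓ) + 1 = maxl ℓ ∧
          (∃ u₀, ((merge ℓ) u₀ : ℕ) = 0 ∧ u₀ ∉ W) ∧ split (merge ℓ) = ℓ) := by
      intro ℓ hℓ hfib
      obtain ⟨⟨hv0, hatt⟩, hcomp⟩ := (hmem ℓ).mp hℓ
      have hadm' := (Finset.mem_filter.mp hℓ).1
      have hM1 : 1 ≤ maxl ℓ := by
        have h0 : (ℓ w₀ : ℕ) ≠ 0 := fun h => hw₀ (hfib w₀ h)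
        have := le_maxl ℓ w₀
        omega
      obtain ⟨u₁, hu₁⟩ := adm_attains hadm' 1 hM1
      have hu₁W : u₁ ∉ W := fun h => by
        have := hW0 ℓ hℓ u₁ h
        omega
      have hmax' : maxl (merge ℓ) + 1 = maxl ℓ := by
        have hle : maxl (merge ℓ) ≤ maxl ℓ - 1 := maxl_le fun u => by
          have := le_maxl ℓ u
          rw [hmv]
          omega
        obtain ⟨uM, huM⟩ := adm_attains hadm' (maxl ℓ) (le_refl _)
        have hge : maxl ℓ - 1 ≤ maxl (merge ℓ) := by
          have := le_maxl (merge ℓ) uM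
          rw [hmv, huM] at this
          omega
        omega
      have hcompat' : ∀ e ∈ Y, ((merge ℓ) (head e) : ℕ) ≤ ((merge ℓ) (tail e) : ℕ) := by
        intro e he
        rw [hmv, hmv]
        by_cases h0 : (ℓ (tail e) : ℕ) = 0
        · have : head e ∈ W := hWclosed e he (hfib _ h0)
          have := hW0 ℓ hℓ _ this
          omega
        · have := hcomp e he
          omega
      have hmem' : merge ℓ ∈ s := by
        rw [hmem]
        refine ⟨⟨by rw [hmv, hv0], ?_⟩, hcompat'⟩
        intro j hj
        obtain ⟨u, hu⟩ := hatt (j + 1) (by omega)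
        exact ⟨u, by rw [hmv, hu]; omega⟩
      refine ⟨hmem', hmax', ⟨u₁, by rw [hmv, hu₁], hu₁W⟩, ?_⟩
      funext u
      by_cases hu : u ∈ W
      · have : (ℓ u : ℕ) = 0 := hW0 ℓ hℓ u hu
        apply Fin.ext
        rw [hsv, if_pos hu, this]
      · have h0 : (ℓ u : ℕ) ≠ 0 := fun h => hu (hfib u h)
        apply Fin.ext
        rw [hsv, if_neg hu, hmv]
        have hlt : (ℓ u : ℕ) < Fintype.card V := (ℓ u).isLt
        rw [Nat.sub_add_cancel (by omega), Nat.mod_eq_of_lt hlt]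
    -- split facts
    have hsplit_all : ∀ ℓ : V → Fin (Fintype.card V), ℓ ∈ s →
        (∃ u₀, (ℓ u₀ : ℕ) = 0 ∧ u₀ ∉ W) →
        (split ℓ ∈ s ∧ maxl (split ℓ) = maxl ℓ + 1 ∧
          (∀ u, ((split ℓ) u : ℕ) = 0 → u ∈ W) ∧ merge (split ℓ) = ℓ) := by
      intro ℓ hℓ hex
      obtain ⟨u₀, hu₀0, hu₀W⟩ := hex
      obtain ⟨⟨hv0, hatt⟩, hcomp⟩ := (hmem ℓ).mp hℓ
      have hadm' := (Finset.mem_filter.mp hℓ).1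
      have hbound : maxl ℓ + 1 < Fintype.card V := hsplit_bound ℓ hℓ ⟨u₀, hu₀0, hu₀W⟩
      have hsv' : ∀ u, u ∉ W → ((split ℓ) u : ℕ) = (ℓ u : ℕ) + 1 := by
        intro u hu
        rw [hsv, if_neg hu, Nat.mod_eq_of_lt (by have := le_maxl ℓ u; omega)]
      have hmax' : maxl (split ℓ) = maxl ℓ + 1 := by
        have hle : maxl (split ℓ) ≤ maxl ℓ + 1 := maxl_le fun u => by
          by_cases hu : u ∈ W
          · rw [hsv, if_pos hu]; omega
          · rw [hsv' u hu]; have := le_maxl ℓ u; omega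
        obtain ⟨uM, huM, huMW⟩ : ∃ u, (ℓ u : ℕ) = maxl ℓ ∧ u ∉ W := by
          rcases Nat.eq_zero_or_pos (maxl ℓ) with h0 | hpos
          · exact ⟨u₀, by omega, hu₀W⟩
          · obtain ⟨u, hu⟩ := adm_attains hadm' (maxl ℓ) (le_refl _)
            refine ⟨u, hu, fun h => ?_⟩
            have := hW0 ℓ hℓ u h
            omega
        have : ((split ℓ) uM : ℕ) = maxl ℓ + 1 := by rw [hsv' uM huMW, huM]
        have hge := le_maxl (split ℓ) uM
        omega
      have hmem' : split ℓ ∈ s := by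
        rw [hmem]
        refine ⟨⟨by rw [hsv, if_pos hvW], ?_⟩, ?_⟩
        · intro j hj
          rcases Nat.eq_zero_or_pos j with rfl | hjpos
          · exact ⟨v, by rw [hsv, if_pos hvW]⟩
          · rcases eq_or_ne j 1 with rfl | hj1
            · exact ⟨u₀, by rw [hsv' u₀ hu₀W, hu₀0]⟩
            · have hjm : j - 1 < maxl ℓ := by omega
              obtain ⟨u, hu⟩ := hatt (j - 1) hjm
              have huW : u ∉ W := fun h => by
                have := hW0 ℓ hℓ u h
                omega
              exact ⟨u, by rw [hsv' u huW, hu]; omega⟩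
        · intro e he
          by_cases ht : tail e ∈ W
          · have hh : head e ∈ W := hWclosed e he ht
            rw [hsv, hsv, if_pos ht, if_pos hh]
          · by_cases hh : head e ∈ W
            · rw [hsv' _ ht, hsv, if_pos hh]
              omega
            · rw [hsv' _ ht, hsv' _ hh]
              have := hcomp e he
              omega
      refine ⟨hmem', hmax', ?_, ?_⟩
      · intro u hu
        by_contra huW
        rw [hsv' u huW] at hu
        omega
      · funext u
        apply Fin.ext
        rw [hmv]
        by_cases hu : u ∈ W
        · rw [hsv, if_pos hu]
          have := hW0 ℓ hℓ u hu
          omega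
        · rw [hsv' u hu]
          omega
    -- apply sum_involution
    refine Finset.sum_involution (fun ℓ _ => ι ℓ) ?_ ?_ ?_ ?_
    · intro ℓ hℓ
      by_cases hfib : ∀ u, (ℓ u : ℕ) = 0 → u ∈ W
      · obtain ⟨_, hmax, _, _⟩ := hmerge_all ℓ hℓ hfib
        rw [hιdef]
        simp only [if_pos hfib]
        rw [← hmax, pow_succ]
        ring
      · have hex : ∃ u₀, (ℓ u₀ : ℕ) = 0 ∧ u₀ ∉ W := by
          push_neg at hfib
          obtain ⟨u, h1, h2⟩ := hfib
          exact ⟨u, h1, h2⟩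
        obtain ⟨_, hmax, _, _⟩ := hsplit_all ℓ hℓ hex
        rw [hιdef]
        simp only [if_neg hfib]
        rw [hmax, pow_succ]
        ring
    · intro ℓ hℓ _
      by_cases hfib : ∀ u, (ℓ u : ℕ) = 0 → u ∈ W
      · obtain ⟨_, hmax, _, _⟩ := hmerge_all ℓ hℓ hfib
        rw [hιdef]
        simp only [if_pos hfib]
        intro h
        rw [h] at hmax
        omega
      · have hex : ∃ u₀, (ℓ u₀ : ℕ) = 0 ∧ u₀ ∉ W := by
          push_neg at hfib
          obtain ⟨u, h1, h2⟩ := hfib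
          exact ⟨u, h1, h2⟩
        obtain ⟨_, hmax, _, _⟩ := hsplit_all ℓ hℓ hex
        rw [hιdef]
        simp only [if_neg hfib]
        intro h
        rw [h] at hmax
        omega
    · intro ℓ hℓ
      by_cases hfib : ∀ u, (ℓ u : ℕ) = 0 → u ∈ W
      · obtain ⟨hm, _, _, _⟩ := hmerge_all ℓ hℓ hfib
        rw [hιdef]
        simpa only [if_pos hfib] using hm
      · have hex : ∃ u₀, (ℓ u₀ : ℕ) = 0 ∧ u₀ ∉ W := by
          push_neg at hfib
          obtain ⟨u, h1, h2⟩ := hfib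
          exact ⟨u, h1, h2⟩
        obtain ⟨hm, _, _, _⟩ := hsplit_all ℓ hℓ hex
        rw [hιdef]
        simpa only [if_neg hfib] using hm
    · intro ℓ hℓ
      by_cases hfib : ∀ u, (ℓ u : ℕ) = 0 → u ∈ W
      · obtain ⟨hm, _, hex', hinv⟩ := hmerge_all ℓ hℓ hfib
        have hng : ¬ (∀ u, ((merge ℓ) u : ℕ) = 0 → u ∈ W) := by
          obtain ⟨u₀, h1, h2⟩ := hex'
          push_neg
          exact ⟨u₀, h1, h2⟩
        simp only [hιdef, if_pos hfib, if_neg hng]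
        exact hinv
      · have hex : ∃ u₀, (ℓ u₀ : ℕ) = 0 ∧ u₀ ∉ W := by
          push_neg at hfib
          obtain ⟨u, h1, h2⟩ := hfib
          exact ⟨u, h1, h2⟩
        obtain ⟨hm, _, hfib', hinv⟩ := hsplit_all ℓ hℓ hex
        simp only [hιdef, if_neg hfib, if_pos hfib']
        exact hinv

/-- Counting spanning sets via binomials. -/
lemma keyB (v : V) (m : ℕ) :
    (lcount tail head v m : ℤ) =
      ∑ ℓ ∈ adm (V := V) v, (-1 : ℤ) ^ (maxl ℓ) * ((Kset tail head ℓ).card.choose m : ℤ) := by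
  classical
  have h0 : (Finset.univ.filter (fun Y : Finset E => spans tail head v Y ∧ Y.card = m)) =
      (Finset.univ.filter (fun Y : Finset E => Y.card = m)).filter
        (fun Y => spans tail head v Y) := by
    rw [Finset.filter_filter]
    ext Y
    simp only [Finset.mem_filter, Finset.mem_univ, true_and]
    tauto
  have h1 : (lcount tail head v m : ℤ) =
      ∑ Y ∈ Finset.univ.filter (fun Y : Finset E => Y.card = m),
        (if spans tail head v Y then (1 : ℤ) else 0) := by
    rw [lcount, h0, Finset.card_filter]
    push_cast [apply_ite (fun (n : ℕ) => (n : ℤ))]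
    rfl
  rw [h1]
  have h2 : ∀ Y : Finset E, (if spans tail head v Y then (1 : ℤ) else 0) =
      ∑ ℓ ∈ (adm (V := V) v).filter (fun ℓ => Y ⊆ Kset tail head ℓ),
        (-1 : ℤ) ^ (maxl ℓ) := fun Y => (keyA tail head v Y).symm
  rw [Finset.sum_congr rfl fun Y _ => h2 Y]
  have h3 : ∀ Y : Finset E,
      (∑ ℓ ∈ (adm (V := V) v).filter (fun ℓ => Y ⊆ Kset tail head ℓ),
        (-1 : ℤ) ^ (maxl ℓ)) =
      ∑ ℓ ∈ adm (V := V) v,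
        (if Y ⊆ Kset tail head ℓ then (-1 : ℤ) ^ (maxl ℓ) else 0) := fun Y =>
    Finset.sum_filter _ _
  rw [Finset.sum_congr rfl fun Y _ => h3 Y]
  rw [Finset.sum_comm]
  refine Finset.sum_congr rfl fun ℓ _ => ?_
  rw [← Finset.sum_filter]
  have h4 : (Finset.univ.filter (fun Y : Finset E => Y.card = m)).filter
      (fun Y => Y ⊆ Kset tail head ℓ) = Finset.powersetCard m (Kset tail head ℓ) := by
    ext Y
    simp only [Finset.mem_filter, Finset.mem_univ, true_and, Finset.mem_powersetCard]
    tauto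
  rw [h4, Finset.sum_const, Finset.card_powersetCard, nsmul_eq_mul, mul_comm]

/-- Eulerian cut identity. -/
lemma cut_balance
    (hEul : ∀ v : V, {e : E | head e = v}.ncard = {e : E | tail e = v}.ncard)
    (S : Finset V) :
    (Finset.univ.filter fun e => tail e ∈ S ∧ head e ∉ S).card =
      (Finset.univ.filter fun e => head e ∈ S ∧ tail e ∉ S).card := by
  classical
  have hdeg : ∀ u : V, (Finset.univ.filter fun e => head e = u).card =
      (Finset.univ.filter fun e => tail e = u).card := by
    intro u
    have h := hEul u
    rwa [Set.ncard_eq_toFinset_card', Set.ncard_eq_toFinset_card',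
      Set.toFinset_setOf, Set.toFinset_setOf] at h
  have htail : (Finset.univ.filter fun e => tail e ∈ S).card =
      ∑ u ∈ S, (Finset.univ.filter fun e => tail e = u).card := by
    rw [Finset.card_eq_sum_card_fiberwise (f := tail) (t := S) (s := Finset.univ.filter fun e => tail e ∈ S)
      (fun e he => (Finset.mem_filter.mp he).2)]
    refine Finset.sum_congr rfl fun u hu => ?_
    congr 1
    ext e
    simp only [Finset.mem_filter, Finset.mem_univ, true_and]
    exact ⟨fun h => h.2, fun h => ⟨h ▸ hu, h⟩⟩
  have hhead : (Finset.univ.filter fun e => head e ∈ S).card =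
      ∑ u ∈ S, (Finset.univ.filter fun e => head e = u).card := by
    rw [Finset.card_eq_sum_card_fiberwise (f := head) (t := S) (s := Finset.univ.filter fun e => head e ∈ S)
      (fun e he => (Finset.mem_filter.mp he).2)]
    refine Finset.sum_congr rfl fun u hu => ?_
    congr 1
    ext e
    simp only [Finset.mem_filter, Finset.mem_univ, true_and]
    exact ⟨fun h => h.2, fun h => ⟨h ▸ hu, h⟩⟩
  have heq : (Finset.univ.filter fun e => tail e ∈ S).card =
      (Finset.univ.filter fun e => head e ∈ S).card := by
    rw [htail, hhead]
    exact Finset.sum_congr rfl fun u _ => (hdeg u).symm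
  have h1 : (Finset.univ.filter fun e => tail e ∈ S ∧ head e ∈ S).card
      + (Finset.univ.filter fun e => tail e ∈ S ∧ head e ∉ S).card
      = (Finset.univ.filter fun e => tail e ∈ S).card := by
    rw [← Finset.filter_filter, ← Finset.filter_filter,
      Finset.card_filter_add_card_filter_not]
  have h2 : (Finset.univ.filter fun e => head e ∈ S ∧ tail e ∈ S).card
      + (Finset.univ.filter fun e => head e ∈ S ∧ tail e ∉ S).card
      = (Finset.univ.filter fun e => head e ∈ S).card := by
    rw [← Finset.filter_filter, ← Finset.filter_filter,
      Finset.card_filter_add_card_filter_not]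
  have h3 : (Finset.univ.filter fun e => tail e ∈ S ∧ head e ∈ S).card =
      (Finset.univ.filter fun e => head e ∈ S ∧ tail e ∈ S).card := by
    congr 1
    ext e
    simp only [Finset.mem_filter]
    tauto
  omega

/-- Cyclic rotation of a level function, bringing `w` to level 0. -/
noncomputable def rot (w : V) (ℓ : V → Fin (Fintype.card V)) : V → Fin (Fintype.card V) :=
  fun u => ⟨(if (ℓ w : ℕ) ≤ (ℓ u : ℕ) then (ℓ u : ℕ) - (ℓ w : ℕ)
      else (ℓ u : ℕ) + (maxl ℓ + 1) - (ℓ w : ℕ)) % Fintype.card V,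
    Nat.mod_lt _ (Fintype.card_pos_iff.mpr ⟨w⟩)⟩

lemma rot_val (w : V) (ℓ : V → Fin (Fintype.card V)) (hM : maxl ℓ < Fintype.card V)
    (u : V) : ((rot w ℓ) u : ℕ) =
      if (ℓ w : ℕ) ≤ (ℓ u : ℕ) then (ℓ u : ℕ) - (ℓ w : ℕ)
      else (ℓ u : ℕ) + (maxl ℓ + 1) - (ℓ w : ℕ) := by
  have ha := le_maxl ℓ u
  have hc := le_maxl ℓ w
  show (if (ℓ w : ℕ) ≤ (ℓ u : ℕ) then (ℓ u : ℕ) - (ℓ w : ℕ)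
      else (ℓ u : ℕ) + (maxl ℓ + 1) - (ℓ w : ℕ)) % Fintype.card V = _
  exact Nat.mod_eq_of_lt (by split_ifs <;> omega)

lemma rot_le (w : V) (ℓ : V → Fin (Fintype.card V)) (hM : maxl ℓ < Fintype.card V)
    (u : V) : ((rot w ℓ) u : ℕ) ≤ maxl ℓ := by
  rw [rot_val w ℓ hM u]
  have ha := le_maxl ℓ u
  have hc := le_maxl ℓ w
  split_ifs <;> omega

lemma rot_maxl {v : V} (w : V) {ℓ : V → Fin (Fintype.card V)} (hℓ : ℓ ∈ adm v) :
    maxl (rot w ℓ) = maxl ℓ := by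
  have hM := adm_maxl_lt hℓ
  have hle : maxl (rot w ℓ) ≤ maxl ℓ := maxl_le (rot_le w ℓ hM)
  have hc := le_maxl ℓ w
  have hge : maxl ℓ ≤ maxl (rot w ℓ) := by
    rcases Nat.eq_zero_or_pos (ℓ w : ℕ) with h0 | hpos
    · obtain ⟨uM, huM⟩ := adm_attains hℓ (maxl ℓ) (le_refl _)
      have hval : ((rot w ℓ) uM : ℕ) = maxl ℓ := by
        rw [rot_val w ℓ hM uM, huM, h0]
        simp
      have := le_maxl (rot w ℓ) uM
      omega
    · obtain ⟨u', hu'⟩ := adm_attains hℓ ((ℓ w : ℕ) - 1) (by omega)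
      have hval : ((rot w ℓ) u' : ℕ) = maxl ℓ := by
        rw [rot_val w ℓ hM u', hu']
        rw [if_neg (by omega)]
        omega
      have := le_maxl (rot w ℓ) u'
      omega
  omega

lemma rot_adm {v : V} (w : V) {ℓ : V → Fin (Fintype.card V)} (hℓ : ℓ ∈ adm v) :
    rot w ℓ ∈ adm w := by
  classical
  have hM := adm_maxl_lt hℓ
  have hc := le_maxl ℓ w
  rw [adm, Finset.mem_filter]
  refine ⟨Finset.mem_univ _, ?_, ?_⟩
  · rw [rot_val w ℓ hM w, if_pos (le_refl _)]
    omega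
  · intro j hj
    rw [rot_maxl w hℓ] at hj
    by_cases hcase : j + (ℓ w : ℕ) ≤ maxl ℓ
    · obtain ⟨u, hu⟩ := adm_attains hℓ (j + (ℓ w : ℕ)) hcase
      refine ⟨u, ?_⟩
      rw [rot_val w ℓ hM u, hu, if_pos (by omega)]
      omega
    · obtain ⟨u, hu⟩ := adm_attains hℓ (j + (ℓ w : ℕ) - (maxl ℓ + 1)) (by omega)
      refine ⟨u, ?_⟩
      rw [rot_val w ℓ hM u, hu, if_neg (by omega)]
      omega

lemma rot_rot {v₀ v₁ : V} {ℓ : V → Fin (Fintype.card V)} (hℓ : ℓ ∈ adm v₀) :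
    rot v₀ (rot v₁ ℓ) = ℓ := by
  have hM := adm_maxl_lt hℓ
  have hM' : maxl (rot v₁ ℓ) < Fintype.card V := by
    rw [rot_maxl v₁ hℓ]
    exact hM
  have hv0 : (ℓ v₀ : ℕ) = 0 := ((Finset.mem_filter.mp hℓ).2).1
  have hc := le_maxl ℓ v₁
  funext u
  apply Fin.ext
  have ha := le_maxl ℓ u
  rw [rot_val v₀ (rot v₁ ℓ) hM' u, rot_val v₁ ℓ hM u, rot_val v₁ ℓ hM v₀,
    rot_maxl v₁ hℓ, hv0]
  split_ifs <;> omega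

lemma rot_Kset
    (hEul : ∀ v : V, {e : E | head e = v}.ncard = {e : E | tail e = v}.ncard)
    {v : V} (w : V) {ℓ : V → Fin (Fintype.card V)} (hℓ : ℓ ∈ adm v) :
    (Kset tail head (rot w ℓ)).card = (Kset tail head ℓ).card := by
  classical
  have hM := adm_maxl_lt hℓ
  set c := (ℓ w : ℕ) with hcdef
  set A1 := Finset.univ.filter
    (fun e : E => (ℓ (head e) : ℕ) < c ∧ c ≤ (ℓ (tail e) : ℕ)) with hA1
  set A2 := Finset.univ.filter
    (fun e : E => (ℓ (tail e) : ℕ) < c ∧ c ≤ (ℓ (head e) : ℕ)) with hA2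
  -- the cut identity
  have h12 : A1.card = A2.card := by
    have hc := cut_balance tail head hEul
      (Finset.univ.filter (fun u => (ℓ u : ℕ) < c))
    have e1 : A1 = Finset.univ.filter
        (fun e => head e ∈ Finset.univ.filter (fun u => (ℓ u : ℕ) < c) ∧
          tail e ∉ Finset.univ.filter (fun u => (ℓ u : ℕ) < c)) := by
      ext e
      simp only [hA1, Finset.mem_filter, Finset.mem_univ, true_and, not_lt]
    have e2 : A2 = Finset.univ.filter
        (fun e => tail e ∈ Finset.univ.filter (fun u => (ℓ u : ℕ) < c) ∧
          head e ∉ Finset.univ.filter (fun u => (ℓ u : ℕ) < c)) := by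
      ext e
      simp only [hA2, Finset.mem_filter, Finset.mem_univ, true_and, not_lt]
    rw [e1, e2, hc]
  -- per-edge description of the rotated compatible set
  have hP : ∀ e : E, (((rot w ℓ) (head e) : ℕ) ≤ ((rot w ℓ) (tail e) : ℕ)) ↔
      (((ℓ (head e) : ℕ) ≤ (ℓ (tail e) : ℕ) ∧
        ¬((ℓ (head e) : ℕ) < c ∧ c ≤ (ℓ (tail e) : ℕ))) ∨
       ((ℓ (tail e) : ℕ) < c ∧ c ≤ (ℓ (head e) : ℕ))) := by
    intro e
    have ha := le_maxl ℓ (tail e)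
    have hb := le_maxl ℓ (head e)
    have hcc := le_maxl ℓ w
    rw [rot_val w ℓ hM (head e), rot_val w ℓ hM (tail e)]
    rw [← hcdef]
    split_ifs <;> omega
  -- split the original count
  have hsplit1 : ((Kset tail head ℓ).filter
      (fun e => (ℓ (head e) : ℕ) < c ∧ c ≤ (ℓ (tail e) : ℕ))).card +
      ((Kset tail head ℓ).filter
      (fun e => ¬((ℓ (head e) : ℕ) < c ∧ c ≤ (ℓ (tail e) : ℕ)))).card =
      (Kset tail head ℓ).card :=
    Finset.card_filter_add_card_filter_not _
  have hK1 : (Kset tail head ℓ).filter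
      (fun e => (ℓ (head e) : ℕ) < c ∧ c ≤ (ℓ (tail e) : ℕ)) = A1 := by
    ext e
    simp only [Kset, hA1, Finset.filter_filter, Finset.mem_filter, Finset.mem_univ, true_and]
    omega
  -- split the rotated count
  have hsplit2 : ((Kset tail head (rot w ℓ)).filter
      (fun e => (ℓ (tail e) : ℕ) < c ∧ c ≤ (ℓ (head e) : ℕ))).card +
      ((Kset tail head (rot w ℓ)).filter
      (fun e => ¬((ℓ (tail e) : ℕ) < c ∧ c ≤ (ℓ (head e) : ℕ)))).card =
      (Kset tail head (rot w ℓ)).card :=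
    Finset.card_filter_add_card_filter_not _
  have hK2 : (Kset tail head (rot w ℓ)).filter
      (fun e => (ℓ (tail e) : ℕ) < c ∧ c ≤ (ℓ (head e) : ℕ)) = A2 := by
    ext e
    simp only [Kset, hA2, Finset.filter_filter, Finset.mem_filter, Finset.mem_univ, true_and]
    have := hP e
    tauto
  have hK3 : (Kset tail head (rot w ℓ)).filter
      (fun e => ¬((ℓ (tail e) : ℕ) < c ∧ c ≤ (ℓ (head e) : ℕ))) =
      (Kset tail head ℓ).filter
      (fun e => ¬((ℓ (head e) : ℕ) < c ∧ c ≤ (ℓ (tail e) : ℕ))) := by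
    ext e
    simp only [Kset, Finset.filter_filter, Finset.mem_filter, Finset.mem_univ, true_and]
    have := hP e
    constructor
    · rintro ⟨h1, h2⟩
      rcases this.mp h1 with ⟨h3, h4⟩ | h3
      · exact ⟨h3, h4⟩
      · exact absurd h3 h2
    · rintro ⟨h1, h2⟩
      have hna : ¬((ℓ (tail e) : ℕ) < c ∧ c ≤ (ℓ (head e) : ℕ)) := by omega
      exact ⟨this.mpr (Or.inl ⟨h1, h2⟩), hna⟩
  rw [← hsplit1, ← hsplit2, hK1, hK2, hK3, h12]

/-- Rotation: root-independence of the signed binomial sum, for Eulerian digraphs. -/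
lemma keyC
    (hEul : ∀ v : V, {e : E | head e = v}.ncard = {e : E | tail e = v}.ncard)
    (v₀ v₁ : V) (m : ℕ) :
    lcount tail head v₀ m = lcount tail head v₁ m := by
  classical
  suffices h : (lcount tail head v₀ m : ℤ) = (lcount tail head v₁ m : ℤ) by
    exact_mod_cast h
  rw [keyB, keyB]
  refine Finset.sum_nbij' (i := fun ℓ => rot v₁ ℓ) (j := fun ℓ => rot v₀ ℓ)
    ?_ ?_ ?_ ?_ ?_
  · intro ℓ hℓ
    exact rot_adm v₁ hℓ
  · intro ℓ hℓ
    exact rot_adm v₀ hℓ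
  · intro ℓ hℓ
    exact rot_rot hℓ
  · intro ℓ hℓ
    exact rot_rot hℓ
  · intro ℓ hℓ
    rw [rot_maxl v₁ hℓ, rot_Kset tail head hEul v₁ hℓ]

end GPRI

/-- For a connected Eulerian digraph, the greedoid polynomial of the
directed branching greedoid is independent of the root vertex. -/
theorem greedoid_polynomial_root_independent [Fintype V] [Fintype E]
    (tail head : E → V)
    (hconn : ∀ u v : V, Relation.ReflTransGen
      (fun a b => ∃ e : E, (tail e = a ∧ head e = b) ∨ (tail e = b ∧ head e = a)) u v)
    (hEul : ∀ v : V, {e : E | head e = v}.ncard = {e : E | tail e = v}.ncard)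
    (v₀ v₁ : V) :
    ∀ x : ℝ, greedoidPolyEval tail head v₀ x = greedoidPolyEval tail head v₁ x := by
  classical
  intro x
  have hfilter : ∀ v : V, (Finset.univ.filter
      (fun X : Finset E => ∃ F : Finset E, IsArborescence tail head F v ∧ Disjoint X F)) =
      (Finset.univ.filter (fun X : Finset E => GPRI.spans tail head v Xᶜ)) := by
    intro v
    ext X
    simp only [Finset.mem_filter, Finset.mem_univ, true_and]
    constructor
    · rintro ⟨F, ⟨hreach, _⟩, hdisj⟩ w
      refine GPRI.reach_mono tail head (fun e he => Finset.mem_compl.mpr ?_) (hreach w)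
      exact fun hX => (Finset.disjoint_left.mp hdisj hX) he
    · intro hs
      obtain ⟨F, hFY, hArb⟩ := GPRI.exists_arborescence tail head hs
      exact ⟨F, hArb, Finset.disjoint_left.mpr fun {e} hX hF => (Finset.mem_compl.mp (hFY hF)) hX⟩
  have hre : ∀ v : V,
      greedoidPolyEval tail head v x =
      ∑ m ∈ Finset.range (Fintype.card E + 1), (GPRI.lcount tail head v m : ℝ) *
        (x - 1) ^ (Fintype.card E + 1 - Fintype.card V - (Fintype.card E - m)) := by
    intro v
    rw [greedoidPolyEval]
    rw [Finset.sum_congr (hfilter v) (fun X _ => rfl)]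
    have step2 : ∑ X ∈ Finset.univ.filter (fun X : Finset E => GPRI.spans tail head v Xᶜ),
        (x - 1) ^ (Fintype.card E + 1 - Fintype.card V - X.card) =
        ∑ Y ∈ Finset.univ.filter (fun Y : Finset E => GPRI.spans tail head v Y),
        (x - 1) ^ (Fintype.card E + 1 - Fintype.card V - (Fintype.card E - Y.card)) := by
      refine Finset.sum_nbij' (fun X => Xᶜ) (fun Y => Yᶜ) ?_ ?_ ?_ ?_ ?_
      · intro X hX
        simp only [Finset.mem_filter, Finset.mem_univ, true_and] at hX ⊢
        exact hX
      · intro Y hY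
        simp only [Finset.mem_filter, Finset.mem_univ, true_and, compl_compl] at hY ⊢
        exact hY
      · intro X _
        exact compl_compl X
      · intro Y _
        exact compl_compl Y
      · intro X _
        congr 1
        rw [Finset.card_compl]
        have : X.card ≤ Fintype.card E := X.card_le_univ.trans_eq (Finset.card_univ)
        omega
    rw [step2]
    rw [← Finset.sum_fiberwise_of_maps_to (g := Finset.card)
      (t := Finset.range (Fintype.card E + 1))
      (fun Y _ => Finset.mem_range.mpr (Nat.lt_succ_of_le
        (Y.card_le_univ.trans_eq Finset.card_univ)))]
    refine Finset.sum_congr rfl fun m _ => ?_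
    have hsc : ∀ Y ∈ (Finset.univ.filter
        (fun Y : Finset E => GPRI.spans tail head v Y)).filter (fun Y => Y.card = m),
        (x - 1) ^ (Fintype.card E + 1 - Fintype.card V - (Fintype.card E - Y.card)) =
        (x - 1) ^ (Fintype.card E + 1 - Fintype.card V - (Fintype.card E - m)) := by
      intro Y hY
      rw [(Finset.mem_filter.mp hY).2]
    rw [Finset.sum_congr rfl hsc, Finset.sum_const, nsmul_eq_mul]
    congr 2
    rw [GPRI.lcount, Finset.filter_filter]
  rw [hre v₀, hre v₁]
  exact Finset.sum_congr rfl fun m _ => by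
    rw [GPRI.keyC tail head hEul v₀ v₁ m]

end
end

section
/- Let G be a connected Eulerian digraph, let ←G be the digraph obtained by reversing every edge, and let v_0 be any vertex. Then the greedoid polynomial of the directed branching greedoid of G rooted at v_0 equals that of ←G rooted at v_0. -/
open Finset

section

variable {V E : Type*}

namespace GreedoidAux

open scoped Classical

variable [Fintype V] [Fintype E]

open Fin.NatCast

/-- `S` is root-connected: every vertex is reachable from `v₀` using edges of `S`. -/
def RC (tail head : E → V) (v₀ : V) (S : Finset E) : Prop :=
  ∀ v, ReachableIn tail head S v₀ v

/-- level functions pinned at the top at `v₀`, surjective below the top level -/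
noncomputable def LL (v₀ : V) : Finset (V → Fin (Fintype.card V + 1)) :=
  Finset.univ.filter (fun ℓ => (∀ v, (ℓ v).val ≤ (ℓ v₀).val) ∧
    ∀ i : ℕ, i < (ℓ v₀).val → ∃ v, (ℓ v).val = i)

/-- number of descending edges -/
noncomputable def dsc (tail head : E → V) (ℓ : V → Fin (Fintype.card V + 1)) : ℕ :=
  (Finset.univ.filter (fun e => (ℓ (head e)).val < (ℓ (tail e)).val)).card

theorem reach_mono (tail head : E → V) {S T : Finset E} (hST : S ⊆ T) {u v : V}
    (h : ReachableIn tail head S u v) : ReachableIn tail head T u v :=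
  Relation.ReflTransGen.mono (r := fun a b => ∃ e ∈ S, tail e = a ∧ head e = b)
    (p := fun a b => ∃ e ∈ T, tail e = a ∧ head e = b)
    (fun _ _ ⟨e, he, h1, h2⟩ => ⟨e, hST he, h1, h2⟩) _ _ h

theorem reach_le (tail head : E → V) {S : Finset E} {n : ℕ} {ℓ : V → Fin n}
    (hS : ∀ e ∈ S, (ℓ (tail e)).val ≤ (ℓ (head e)).val) {u v : V}
    (h : ReachableIn tail head S u v) : (ℓ u).val ≤ (ℓ v).val := by
  induction h with
  | refl => exact le_refl _
  | tail _ h2 ih =>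
      obtain ⟨e, he, ht, hh⟩ := h2
      exact ih.trans (by rw [← ht, ← hh]; exact hS e he)

/-- value of `gK`: the new pinned level in the involution -/
noncomputable def gK (v₀ : V) (R : Finset V) (ℓ : V → Fin (Fintype.card V + 1)) : ℕ :=
  if ∃ u, u ∉ R ∧ (ℓ u).val = (ℓ v₀).val then (ℓ v₀).val + 1 else (ℓ v₀).val - 1

/-- the involution used in the inclusion–exclusion lemma -/
noncomputable def gfun (v₀ : V) (R : Finset V) (ℓ : V → Fin (Fintype.card V + 1)) :
    V → Fin (Fintype.card V + 1) :=
  fun v => if v ∈ R then ((gK v₀ R ℓ : ℕ) : Fin (Fintype.card V + 1)) else ℓ v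

theorem IE (tail head : E → V) (v₀ : V) (S : Finset E) :
    ∑ ℓ ∈ (LL v₀).filter
        (fun ℓ => ∀ e ∈ S, (ℓ (tail e)).val ≤ (ℓ (head e)).val),
      (-1 : ℤ) ^ (ℓ v₀).val
      = if RC tail head v₀ S then 1 else 0 := by
  set N := Fintype.card V with hN
  set fs := (LL v₀).filter
      (fun ℓ : V → Fin (N + 1) => ∀ e ∈ S, (ℓ (tail e)).val ≤ (ℓ (head e)).val) with hfs
  have hfacts : ∀ ℓ ∈ fs, (∀ v, (ℓ v).val ≤ (ℓ v₀).val) ∧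
      (∀ i : ℕ, i < (ℓ v₀).val → ∃ v, (ℓ v).val = i) ∧
      (∀ e ∈ S, (ℓ (tail e)).val ≤ (ℓ (head e)).val) := by
    intro ℓ h
    simp only [hfs, LL, Finset.mem_filter, Finset.mem_univ, true_and] at h
    tauto
  by_cases hrc : RC tail head v₀ S
  · rw [if_pos hrc]
    have hone : fs = {fun _ => (0 : Fin (N + 1))} := by
      ext ℓ
      constructor
      · intro h
        obtain ⟨hb, hs, hmon⟩ := hfacts ℓ h
        have hK : ∀ v, (ℓ v).val = (ℓ v₀).val := fun v =>
          le_antisymm (hb v) (reach_le tail head hmon (hrc v))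
        have hK0 : (ℓ v₀).val = 0 := by
          by_contra h0
          obtain ⟨w, hw⟩ := hs 0 (Nat.pos_of_ne_zero h0)
          rw [hK w] at hw; exact h0 hw
        simp only [Finset.mem_singleton]
        funext v
        exact Fin.ext (by rw [hK v, hK0]; rfl)
      · intro h
        simp only [Finset.mem_singleton] at h
        subst h
        simp only [hfs, LL, Finset.mem_filter, Finset.mem_univ, true_and]
        exact ⟨⟨fun v => le_refl _, fun i hi => absurd hi (by simp)⟩,
          fun e he => le_refl _⟩
    rw [hone, Finset.sum_singleton]
    simp
  · rw [if_neg hrc]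
    set R : Finset V := Finset.univ.filter (fun v => ReachableIn tail head S v₀ v) with hRdef
    have hv₀R : v₀ ∈ R := by
      simp only [hRdef, Finset.mem_filter, Finset.mem_univ, true_and]
      exact Relation.ReflTransGen.refl
    have hclosed : ∀ e ∈ S, tail e ∈ R → head e ∈ R := by
      intro e he ht
      simp only [hRdef, Finset.mem_filter, Finset.mem_univ, true_and] at ht ⊢
      exact ht.tail ⟨e, he, rfl, rfl⟩
    obtain ⟨v₁, hv₁⟩ : ∃ v, v ∉ R := by
      by_contra h
      push_neg at h
      refine hrc (fun v => ?_)
      have := h v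
      simp only [hRdef, Finset.mem_filter, Finset.mem_univ, true_and] at this
      exact this
    have hRK : ∀ ℓ ∈ fs, ∀ v ∈ R, (ℓ v).val = (ℓ v₀).val := by
      intro ℓ h v hv
      simp only [hRdef, Finset.mem_filter, Finset.mem_univ, true_and] at hv
      exact le_antisymm ((hfacts ℓ h).1 v) (reach_le tail head (hfacts ℓ h).2.2 hv)
    -- bound in the push-up case
    have hKlt : ∀ ℓ ∈ fs, (∃ u, u ∉ R ∧ (ℓ u).val = (ℓ v₀).val) → (ℓ v₀).val + 1 ≤ N := by
      intro ℓ h hex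
      obtain ⟨u₀, hu₀R, hu₀⟩ := hex
      set K := (ℓ v₀).val with hK
      have hsurj := (hfacts ℓ h).2.1
      set wfun : ℕ → V := fun i => if h' : i < K then Classical.choose (hsurj i h') else u₀
        with hwfun
      have hwval : ∀ i ≤ K, (ℓ (wfun i)).val = i := by
        intro i hi
        by_cases h' : i < K
        · simp only [hwfun, dif_pos h']
          exact Classical.choose_spec (hsurj i h')
        · have hiK : i = K := le_antisymm hi (not_lt.1 h')
          subst hiK
          simp only [hwfun, dif_neg h']
          exact hu₀
      have hcard : ((Finset.range (K + 1)).image wfun).card = K + 1 := by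
        rw [Finset.card_image_of_injOn, Finset.card_range]
        intro i hi j hj hij
        simp only [Finset.coe_range, Set.mem_Iio] at hi hj
        have := hwval i (by omega)
        rw [hij, hwval j (by omega)] at this
        omega
      have hv₀nm : v₀ ∉ (Finset.range (K + 1)).image wfun := by
        intro hmem
        obtain ⟨i, hi, hwi⟩ := Finset.mem_image.1 hmem
        simp only [Finset.mem_range] at hi
        have hvi := hwval i (by omega)
        rw [hwi] at hvi
        by_cases h' : i < K
        · omega
        · have hiK : i = K := by omega
          have : wfun i = u₀ := by simp [hwfun, h']
          rw [hwi] at this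
          exact hu₀R (this ▸ hv₀R)
      have : (insert v₀ ((Finset.range (K + 1)).image wfun)).card ≤ N := by
        rw [hN]
        exact Finset.card_le_univ _
      rw [Finset.card_insert_of_notMem hv₀nm, hcard] at this
      omega
    apply Finset.sum_involution (g := fun ℓ _ => gfun v₀ R ℓ)
    · -- signs cancel
      intro ℓ hℓ
      have hv : (gfun v₀ R ℓ) v₀ = ((gK v₀ R ℓ : ℕ) : Fin (N + 1)) := by
        simp [gfun, hv₀R]
      by_cases hex : ∃ u, u ∉ R ∧ (ℓ u).val = (ℓ v₀).val
      · have hgk : gK v₀ R ℓ = (ℓ v₀).val + 1 := by simp [gK, hex]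
        have hval : ((gfun v₀ R ℓ) v₀).val = (ℓ v₀).val + 1 := by
          rw [hv, hgk, Fin.val_cast_of_lt (by have := hKlt ℓ hℓ hex; omega)]
        rw [hval, pow_succ]
        ring
      · have hK1 : 1 ≤ (ℓ v₀).val := by
          by_contra h0
          have hℓv₁ : (ℓ v₁).val = (ℓ v₀).val := by
            have := (hfacts ℓ hℓ).1 v₁
            omega
          exact hex ⟨v₁, hv₁, hℓv₁⟩
        have hgk : gK v₀ R ℓ = (ℓ v₀).val - 1 := by simp [gK, hex]
        have hval : ((gfun v₀ R ℓ) v₀).val = (ℓ v₀).val - 1 := by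
          rw [hv, hgk, Fin.val_cast_of_lt (by have := (ℓ v₀).isLt; omega)]
        rw [hval]
        have h2 : (-1 : ℤ) ^ (ℓ v₀).val = -(-1) ^ ((ℓ v₀).val - 1) := by
          conv_lhs => rw [show ((ℓ v₀).val : ℕ) = ((ℓ v₀).val - 1) + 1 from by omega]
          rw [pow_succ]
          ring
        rw [h2]
        ring
    · -- g ≠ id
      intro ℓ hℓ _
      intro hgeq
      have hv := congrFun hgeq v₀
      have hv' : (gfun v₀ R ℓ) v₀ = ((gK v₀ R ℓ : ℕ) : Fin (N + 1)) := by
        simp [gfun, hv₀R]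
      by_cases hex : ∃ u, u ∉ R ∧ (ℓ u).val = (ℓ v₀).val
      · have hgk : gK v₀ R ℓ = (ℓ v₀).val + 1 := by simp [gK, hex]
        have hval : ((gfun v₀ R ℓ) v₀).val = (ℓ v₀).val + 1 := by
          rw [hv', hgk, Fin.val_cast_of_lt (by have := hKlt ℓ hℓ hex; omega)]
        rw [hv] at hval
        omega
      · have hK1 : 1 ≤ (ℓ v₀).val := by
          by_contra h0
          have : (ℓ v₁).val = (ℓ v₀).val := by
            have := (hfacts ℓ hℓ).1 v₁
            omega
          exact hex ⟨v₁, hv₁, this⟩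
        have hgk : gK v₀ R ℓ = (ℓ v₀).val - 1 := by simp [gK, hex]
        have hval : ((gfun v₀ R ℓ) v₀).val = (ℓ v₀).val - 1 := by
          rw [hv', hgk, Fin.val_cast_of_lt (by have := (ℓ v₀).isLt; omega)]
        rw [hv] at hval
        omega
    · -- membership
      intro ℓ hℓ
      obtain ⟨hb, hsurj, hmon⟩ := hfacts ℓ hℓ
      by_cases hex : ∃ u, u ∉ R ∧ (ℓ u).val = (ℓ v₀).val
      · have hgk : gK v₀ R ℓ = (ℓ v₀).val + 1 := by simp [gK, hex]
        have hbound := hKlt ℓ hℓ hex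
        have hvalR : ∀ v ∈ R, ((gfun v₀ R ℓ) v).val = (ℓ v₀).val + 1 := by
          intro v hv
          simp only [gfun, if_pos hv, hgk]
          exact Fin.val_cast_of_lt (by omega)
        have hvalNR : ∀ v ∉ R, (gfun v₀ R ℓ) v = ℓ v := by
          intro v hv
          simp [gfun, hv]
        simp only [hfs, LL, Finset.mem_filter, Finset.mem_univ, true_and]
        refine ⟨⟨?_, ?_⟩, ?_⟩
        · intro v
          rw [hvalR v₀ hv₀R]
          by_cases hv : v ∈ R
          · rw [hvalR v hv]
          · rw [hvalNR v hv]
            have := hb v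
            omega
        · intro i hi
          rw [hvalR v₀ hv₀R] at hi
          by_cases hiK : i < (ℓ v₀).val
          · obtain ⟨w, hw⟩ := hsurj i hiK
            have hwR : w ∉ R := fun hwR => by have := hRK ℓ hℓ w hwR; omega
            exact ⟨w, by rw [hvalNR w hwR]; exact hw⟩
          · obtain ⟨u₀, hu₀R, hu₀⟩ := hex
            have hiK' : i = (ℓ v₀).val := by omega
            exact ⟨u₀, by rw [hvalNR u₀ hu₀R, hu₀, hiK']⟩
        · intro e he
          by_cases hte : tail e ∈ R
          · have hhe := hclosed e he hte
            rw [hvalR _ hte, hvalR _ hhe]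
          · by_cases hhe : head e ∈ R
            · rw [hvalNR _ hte, hvalR _ hhe]
              have := hb (tail e)
              omega
            · rw [hvalNR _ hte, hvalNR _ hhe]
              exact hmon e he
      · have hne : ∀ u, u ∉ R → (ℓ u).val ≠ (ℓ v₀).val := by
          intro u hu h'
          exact hex ⟨u, hu, h'⟩
        have hK1 : 1 ≤ (ℓ v₀).val := by
          have h1 := hne v₁ hv₁
          have := hb v₁
          omega
        have hgk : gK v₀ R ℓ = (ℓ v₀).val - 1 := by simp [gK, hex]
        have hvalR : ∀ v ∈ R, ((gfun v₀ R ℓ) v).val = (ℓ v₀).val - 1 := by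
          intro v hv
          simp only [gfun, if_pos hv, hgk]
          exact Fin.val_cast_of_lt (by have := (ℓ v₀).isLt; omega)
        have hvalNR : ∀ v ∉ R, (gfun v₀ R ℓ) v = ℓ v := by
          intro v hv
          simp [gfun, hv]
        simp only [hfs, LL, Finset.mem_filter, Finset.mem_univ, true_and]
        refine ⟨⟨?_, ?_⟩, ?_⟩
        · intro v
          rw [hvalR v₀ hv₀R]
          by_cases hv : v ∈ R
          · rw [hvalR v hv]
          · rw [hvalNR v hv]
            have := hb v
            have := hne v hv
            omega
        · intro i hi
          rw [hvalR v₀ hv₀R] at hi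
          obtain ⟨w, hw⟩ := hsurj i (by omega)
          have hwR : w ∉ R := fun hwR => by have := hRK ℓ hℓ w hwR; omega
          exact ⟨w, by rw [hvalNR w hwR]; exact hw⟩
        · intro e he
          by_cases hte : tail e ∈ R
          · have hhe := hclosed e he hte
            rw [hvalR _ hte, hvalR _ hhe]
          · by_cases hhe : head e ∈ R
            · rw [hvalNR _ hte, hvalR _ hhe]
              have := hb (tail e)
              have := hne (tail e) hte
              omega
            · rw [hvalNR _ hte, hvalNR _ hhe]
              exact hmon e he
    · -- involution
      intro ℓ hℓ
      obtain ⟨hb, hsurj, hmon⟩ := hfacts ℓ hℓ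
      have hvalNR : ∀ v ∉ R, (gfun v₀ R ℓ) v = ℓ v := by
        intro v hv
        simp [gfun, hv]
      by_cases hex : ∃ u, u ∉ R ∧ (ℓ u).val = (ℓ v₀).val
      · have hgk : gK v₀ R ℓ = (ℓ v₀).val + 1 := by simp [gK, hex]
        have hbound := hKlt ℓ hℓ hex
        have hvalR : ∀ v ∈ R, ((gfun v₀ R ℓ) v).val = (ℓ v₀).val + 1 := by
          intro v hv
          simp only [gfun, if_pos hv, hgk]
          exact Fin.val_cast_of_lt (by omega)
        have hex' : ¬∃ u, u ∉ R ∧ ((gfun v₀ R ℓ) u).val = ((gfun v₀ R ℓ) v₀).val := by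
          rintro ⟨u, huR, hu⟩
          rw [hvalNR u huR, hvalR v₀ hv₀R] at hu
          have := hb u
          omega
        have hgk' : gK v₀ R (gfun v₀ R ℓ) = (ℓ v₀).val := by
          simp only [gK, if_neg hex']
          rw [hvalR v₀ hv₀R]
          omega
        funext v
        by_cases hv : v ∈ R
        · simp only [gfun, if_pos hv, hgk']
          exact Fin.ext ((Fin.val_cast_of_lt (ℓ v₀).isLt).trans (hRK ℓ hℓ v hv).symm)
        · simp only [gfun, if_neg hv]
      · have hne : ∀ u, u ∉ R → (ℓ u).val ≠ (ℓ v₀).val := by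
          intro u hu h'
          exact hex ⟨u, hu, h'⟩
        have hK1 : 1 ≤ (ℓ v₀).val := by
          have h1 := hne v₁ hv₁
          have := hb v₁
          omega
        have hgk : gK v₀ R ℓ = (ℓ v₀).val - 1 := by simp [gK, hex]
        have hvalR : ∀ v ∈ R, ((gfun v₀ R ℓ) v).val = (ℓ v₀).val - 1 := by
          intro v hv
          simp only [gfun, if_pos hv, hgk]
          exact Fin.val_cast_of_lt (by have := (ℓ v₀).isLt; omega)
        have hex' : ∃ u, u ∉ R ∧ ((gfun v₀ R ℓ) u).val = ((gfun v₀ R ℓ) v₀).val := by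
          obtain ⟨w, hw⟩ := hsurj ((ℓ v₀).val - 1) (by omega)
          have hwR : w ∉ R := fun hwR => by have := hRK ℓ hℓ w hwR; omega
          refine ⟨w, hwR, ?_⟩
          rw [hvalNR w hwR, hvalR v₀ hv₀R, hw]
        have hgk' : gK v₀ R (gfun v₀ R ℓ) = (ℓ v₀).val := by
          simp only [gK, if_pos hex']
          rw [hvalR v₀ hv₀R]
          omega
        funext v
        by_cases hv : v ∈ R
        · simp only [gfun, if_pos hv, hgk']
          exact Fin.ext ((Fin.val_cast_of_lt (ℓ v₀).isLt).trans (hRK ℓ hℓ v hv).symm)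
        · simp only [gfun, if_neg hv]

theorem countL (tail head : E → V) (v₀ : V) (k : ℕ) :
    (((Finset.powersetCard k (Finset.univ : Finset E)).filter (RC tail head v₀)).card : ℤ)
    = ∑ ℓ ∈ LL v₀, (-1 : ℤ) ^ (ℓ v₀).val *
        (Nat.choose (Fintype.card E - dsc tail head ℓ) k : ℤ) := by
  rw [← Finset.sum_boole]
  have hIE : ∀ S ∈ Finset.powersetCard k (Finset.univ : Finset E),
      (if RC tail head v₀ S then (1 : ℤ) else 0)
      = ∑ ℓ ∈ LL v₀, (if (∀ e ∈ S, (ℓ (tail e)).val ≤ (ℓ (head e)).val)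
          then (-1 : ℤ) ^ (ℓ v₀).val else 0) := by
    intro S _
    rw [← Finset.sum_filter, IE tail head v₀ S]
  rw [Finset.sum_congr rfl hIE, Finset.sum_comm]
  refine Finset.sum_congr rfl (fun ℓ _ => ?_)
  rw [← Finset.sum_filter, Finset.sum_const]
  have hset : (Finset.powersetCard k (Finset.univ : Finset E)).filter
      (fun S => ∀ e ∈ S, (ℓ (tail e)).val ≤ (ℓ (head e)).val)
      = Finset.powersetCard k
          (Finset.univ.filter (fun e => (ℓ (tail e)).val ≤ (ℓ (head e)).val)) := by
    ext S
    simp only [Finset.mem_filter, Finset.mem_powersetCard]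
    constructor
    · rintro ⟨⟨-, hc⟩, hcond⟩
      exact ⟨fun e he => Finset.mem_filter.2 ⟨Finset.mem_univ e, hcond e he⟩, hc⟩
    · rintro ⟨hsub, hc⟩
      exact ⟨⟨Finset.subset_univ S, hc⟩, fun e he => (Finset.mem_filter.1 (hsub he)).2⟩
  rw [hset, Finset.card_powersetCard]
  have hcard : (Finset.univ.filter (fun e => (ℓ (tail e)).val ≤ (ℓ (head e)).val)).card
      = Fintype.card E - dsc tail head ℓ := by
    have h2 := Finset.card_filter_add_card_filter_not
      (s := (Finset.univ : Finset E)) (p := fun e => (ℓ (head e)).val < (ℓ (tail e)).val)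
    have h3 : (Finset.univ.filter (fun e => ¬ (ℓ (head e)).val < (ℓ (tail e)).val))
        = Finset.univ.filter (fun e => (ℓ (tail e)).val ≤ (ℓ (head e)).val) :=
      Finset.filter_congr (fun e _ => not_lt)
    rw [h3] at h2
    have h5 : (Finset.univ : Finset E).card = Fintype.card E := Finset.card_univ
    unfold dsc
    omega
  rw [hcard, nsmul_eq_mul, mul_comm]

theorem cutbal (tail head : E → V)
    (hEul : ∀ v : V, {e : E | head e = v}.ncard = {e : E | tail e = v}.ncard)
    (A : Finset V) :
    (Finset.univ.filter (fun e => tail e ∈ A ∧ head e ∉ A)).card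
    = (Finset.univ.filter (fun e => head e ∈ A ∧ tail e ∉ A)).card := by
  have hv : ∀ v : V, (Finset.univ.filter (fun e => head e = v)).card
      = (Finset.univ.filter (fun e => tail e = v)).card := by
    intro v
    have h := hEul v
    rwa [Set.ncard_eq_toFinset_card', Set.ncard_eq_toFinset_card', Set.toFinset_setOf,
      Set.toFinset_setOf] at h
  have hA : (Finset.univ.filter (fun e => head e ∈ A)).card
      = (Finset.univ.filter (fun e => tail e ∈ A)).card := by
    have hH := Finset.card_eq_sum_card_fiberwise
      (s := Finset.univ.filter (fun e => head e ∈ A)) (t := A) (f := head)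
      (fun e he => (Finset.mem_filter.1 he).2)
    have hT := Finset.card_eq_sum_card_fiberwise
      (s := Finset.univ.filter (fun e => tail e ∈ A)) (t := A) (f := tail)
      (fun e he => (Finset.mem_filter.1 he).2)
    have hfibH : ∀ v ∈ A, ((Finset.univ.filter (fun e => head e ∈ A)).filter
        (fun e => head e = v)) = Finset.univ.filter (fun e => head e = v) := by
      intro v hv'
      ext e
      simp only [Finset.mem_filter, Finset.mem_univ, true_and]
      exact ⟨fun h => h.2, fun h => ⟨h ▸ hv', h⟩⟩
    have hfibT : ∀ v ∈ A, ((Finset.univ.filter (fun e => tail e ∈ A)).filter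
        (fun e => tail e = v)) = Finset.univ.filter (fun e => tail e = v) := by
      intro v hv'
      ext e
      simp only [Finset.mem_filter, Finset.mem_univ, true_and]
      exact ⟨fun h => h.2, fun h => ⟨h ▸ hv', h⟩⟩
    rw [hH, hT]
    refine Finset.sum_congr rfl (fun v hv' => ?_)
    rw [hfibH v hv', hfibT v hv', hv v]
  have d1 := Finset.card_filter_add_card_filter_not
    (s := Finset.univ.filter (fun e => head e ∈ A)) (p := fun e => tail e ∈ A)
  have d2 := Finset.card_filter_add_card_filter_not
    (s := Finset.univ.filter (fun e => tail e ∈ A)) (p := fun e => head e ∈ A)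
  rw [Finset.filter_filter, Finset.filter_filter] at d1 d2
  have hcomm : Finset.univ.filter (fun e => head e ∈ A ∧ tail e ∈ A)
      = Finset.univ.filter (fun e => tail e ∈ A ∧ head e ∈ A) :=
    Finset.filter_congr (fun e _ => and_comm)
  rw [hcomm] at d1
  omega

/-- the `τ` involution on level functions -/
noncomputable def tfun (v₀ : V) (ℓ : V → Fin (Fintype.card V + 1)) :
    V → Fin (Fintype.card V + 1) :=
  fun v => if (ℓ v).val = (ℓ v₀).val then ℓ v
    else (((ℓ v₀).val - 1 - (ℓ v).val : ℕ) : Fin (Fintype.card V + 1))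

theorem tfun_val (v₀ : V) (ℓ : V → Fin (Fintype.card V + 1)) (v : V) :
    ((tfun v₀ ℓ) v).val
      = if (ℓ v).val = (ℓ v₀).val then (ℓ v₀).val else (ℓ v₀).val - 1 - (ℓ v).val := by
  by_cases h : (ℓ v).val = (ℓ v₀).val
  · simp [tfun, h]
  · simp only [tfun, if_neg h]
    exact Fin.val_cast_of_lt (by have := (ℓ v₀).isLt; omega)

theorem tfun_mem (v₀ : V) (ℓ : V → Fin (Fintype.card V + 1)) (h : ℓ ∈ LL v₀) :
    tfun v₀ ℓ ∈ LL v₀ := by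
  simp only [LL, Finset.mem_filter, Finset.mem_univ, true_and] at h ⊢
  obtain ⟨hb, hsurj⟩ := h
  have hv₀ : ((tfun v₀ ℓ) v₀).val = (ℓ v₀).val := by rw [tfun_val, if_pos rfl]
  refine ⟨?_, ?_⟩
  · intro v
    rw [hv₀, tfun_val]
    split
    · exact le_refl _
    · omega
  · intro i hi
    rw [hv₀] at hi
    obtain ⟨w, hw⟩ := hsurj ((ℓ v₀).val - 1 - i) (by omega)
    refine ⟨w, ?_⟩
    rw [tfun_val, if_neg (by omega)]
    omega

theorem tfun_invol (v₀ : V) (ℓ : V → Fin (Fintype.card V + 1)) (h : ℓ ∈ LL v₀) :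
    tfun v₀ (tfun v₀ ℓ) = ℓ := by
  simp only [LL, Finset.mem_filter, Finset.mem_univ, true_and] at h
  obtain ⟨hb, _⟩ := h
  have hv₀ : ((tfun v₀ ℓ) v₀).val = (ℓ v₀).val := by rw [tfun_val, if_pos rfl]
  funext v
  apply Fin.ext
  rw [tfun_val v₀ (tfun v₀ ℓ) v, hv₀, tfun_val v₀ ℓ v]
  have := hb v
  split_ifs <;> omega

theorem dsc_tfun (tail head : E → V) (v₀ : V)
    (hEul : ∀ v : V, {e : E | head e = v}.ncard = {e : E | tail e = v}.ncard)
    (ℓ : V → Fin (Fintype.card V + 1)) (h : ℓ ∈ LL v₀) :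
    dsc head tail (tfun v₀ ℓ) = dsc tail head ℓ := by
  simp only [LL, Finset.mem_filter, Finset.mem_univ, true_and] at h
  obtain ⟨hb, _⟩ := h
  set A : Finset V := Finset.univ.filter (fun v => (ℓ v).val = (ℓ v₀).val) with hA
  have hmemA : ∀ v, v ∈ A ↔ (ℓ v).val = (ℓ v₀).val := by
    intro v
    simp [hA]
  -- asc of tfun ℓ
  have h1 : Finset.univ.filter (fun e => ((tfun v₀ ℓ) (tail e)).val < ((tfun v₀ ℓ) (head e)).val)
      = Finset.univ.filter (fun e => (tail e ∉ A ∧ head e ∈ A) ∨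
          (tail e ∉ A ∧ head e ∉ A ∧ (ℓ (head e)).val < (ℓ (tail e)).val)) := by
    apply Finset.filter_congr
    intro e _
    rw [tfun_val, tfun_val]
    simp only [hmemA]
    have hbt := hb (tail e)
    have hbh := hb (head e)
    by_cases h1 : (ℓ (tail e)).val = (ℓ v₀).val <;> by_cases h2 : (ℓ (head e)).val = (ℓ v₀).val <;>
      simp [h1, h2] <;> omega
  have h2 : Finset.univ.filter (fun e => (ℓ (head e)).val < (ℓ (tail e)).val)
      = Finset.univ.filter (fun e => (tail e ∈ A ∧ head e ∉ A) ∨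
          (tail e ∉ A ∧ head e ∉ A ∧ (ℓ (head e)).val < (ℓ (tail e)).val)) := by
    apply Finset.filter_congr
    intro e _
    simp only [hmemA]
    have hbt := hb (tail e)
    have hbh := hb (head e)
    by_cases h1 : (ℓ (tail e)).val = (ℓ v₀).val <;> by_cases h2 : (ℓ (head e)).val = (ℓ v₀).val <;>
      simp [h1, h2] <;> omega
  unfold dsc
  rw [h1, h2, Finset.filter_or, Finset.filter_or,
    Finset.card_union_of_disjoint, Finset.card_union_of_disjoint]
  · have hc : (Finset.univ.filter (fun e => tail e ∉ A ∧ head e ∈ A)).card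
        = (Finset.univ.filter (fun e => tail e ∈ A ∧ head e ∉ A)).card := by
      rw [show (Finset.univ.filter (fun e => tail e ∉ A ∧ head e ∈ A))
          = Finset.univ.filter (fun e => head e ∈ A ∧ tail e ∉ A) from
        Finset.filter_congr (fun e _ => and_comm)]
      exact (cutbal tail head hEul A).symm
    rw [hc]
  · rw [Finset.disjoint_filter]
    intro e _ h'
    tauto
  · rw [Finset.disjoint_filter]
    intro e _ h'
    tauto

theorem sum_dsc (tail head : E → V) (v₀ : V)
    (hEul : ∀ v : V, {e : E | head e = v}.ncard = {e : E | tail e = v}.ncard) (w : ℕ → ℤ) :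
    ∑ ℓ ∈ LL v₀, (-1 : ℤ) ^ (ℓ v₀).val * w (dsc tail head ℓ)
    = ∑ ℓ ∈ LL v₀, (-1 : ℤ) ^ (ℓ v₀).val * w (dsc head tail ℓ) := by
  apply Finset.sum_nbij' (i := tfun v₀) (j := tfun v₀)
  · exact fun ℓ h => tfun_mem v₀ ℓ h
  · exact fun ℓ h => tfun_mem v₀ ℓ h
  · exact fun ℓ h => tfun_invol v₀ ℓ h
  · exact fun ℓ h => tfun_invol v₀ ℓ h
  · intro ℓ h
    have hv₀ : ((tfun v₀ ℓ) v₀).val = (ℓ v₀).val := by rw [tfun_val, if_pos rfl]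
    rw [hv₀, dsc_tfun tail head v₀ hEul ℓ h]

/-- vertices covered by a partial arborescence -/
noncomputable def reached (head : E → V) (v₀ : V) (F : Finset E) : Finset V :=
  insert v₀ (F.image head)

/-- `F` is a partial arborescence -/
def good (tail head : E → V) (v₀ : V) (F : Finset E) : Prop :=
  (∀ e ∈ F, ReachableIn tail head F v₀ (tail e)) ∧ Set.InjOn head ↑F ∧ ∀ e ∈ F, head e ≠ v₀

theorem reach_of_reached (tail head : E → V) (v₀ : V) {F : Finset E}
    (hg : good tail head v₀ F) : ∀ v ∈ reached head v₀ F, ReachableIn tail head F v₀ v := by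
  intro v hv
  rcases Finset.mem_insert.1 hv with h | h
  · exact h ▸ Relation.ReflTransGen.refl
  · obtain ⟨e, he, hev⟩ := Finset.mem_image.1 h
    exact hev ▸ (hg.1 e he).tail ⟨e, he, rfl, rfl⟩

theorem crossing (tail head : E → V) (v₀ : V) {S F : Finset E} {v : V}
    (hr : ReachableIn tail head S v₀ v) (hv : v ∉ reached head v₀ F) :
    ∃ e ∈ S, tail e ∈ reached head v₀ F ∧ head e ∉ reached head v₀ F := by
  have key : ∀ u, ReachableIn tail head S v₀ u →
      u ∈ reached head v₀ F ∨ ∃ e ∈ S, tail e ∈ reached head v₀ F ∧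
        head e ∉ reached head v₀ F := by
    intro u hu
    induction hu with
    | refl => exact Or.inl (Finset.mem_insert_self _ _)
    | tail _ h2 ih =>
        obtain ⟨e, he, ht, hh⟩ := h2
        rcases ih with hmem | hcross
        · by_cases hc : head e ∈ reached head v₀ F
          · exact Or.inl (hh ▸ hc)
          · exact Or.inr ⟨e, he, ht ▸ hmem, hc⟩
        · exact Or.inr hcross
  rcases key v hr with hmem | hcross
  · exact absurd hmem hv
  · exact hcross

theorem build (tail head : E → V) (v₀ : V) {S : Finset E} (hrc : RC tail head v₀ S) :
    ∀ j : ℕ, ∀ F : Finset E, F ⊆ S → good tail head v₀ F →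
      Fintype.card V ≤ (reached head v₀ F).card + j →
      ∃ F', F' ⊆ S ∧ good tail head v₀ F' ∧ reached head v₀ F' = Finset.univ := by
  intro j
  induction j with
  | zero =>
      intro F hFS hg hcard
      refine ⟨F, hFS, hg, Finset.eq_univ_of_card _ (le_antisymm ?_ ?_)⟩
      · exact (Finset.card_le_univ _).trans (le_of_eq Finset.card_univ)
      · omega
  | succ j ih =>
      intro F hFS hg hcard
      by_cases hall : reached head v₀ F = Finset.univ
      · exact ⟨F, hFS, hg, hall⟩
      · obtain ⟨v, hv⟩ : ∃ v, v ∉ reached head v₀ F := by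
          by_contra h
          push_neg at h
          exact hall (Finset.eq_univ_of_forall h)
        obtain ⟨e, heS, hte, hhe⟩ := crossing tail head v₀ (hrc v) hv
        have heF : e ∉ F := fun h =>
          hhe (Finset.mem_insert_of_mem (Finset.mem_image_of_mem head h))
        have hgood' : good tail head v₀ (insert e F) := by
          refine ⟨?_, ?_, ?_⟩
          · intro f hf
            rcases Finset.mem_insert.1 hf with heq | hf'
            · rw [heq]
              exact reach_mono tail head (Finset.subset_insert e F)
                (reach_of_reached tail head v₀ hg _ hte)
            · exact reach_mono tail head (Finset.subset_insert e F) (hg.1 f hf')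
          · intro a ha b hb hab
            simp only [Finset.coe_insert, Set.mem_insert_iff, Finset.mem_coe] at ha hb
            rcases ha with rfl | ha' <;> rcases hb with rfl | hb'
            · rfl
            · exact absurd (Finset.mem_insert_of_mem
                (Finset.mem_image.2 ⟨b, hb', hab.symm⟩)) hhe
            · exact absurd (Finset.mem_insert_of_mem
                (Finset.mem_image.2 ⟨a, ha', hab⟩)) hhe
            · exact hg.2.1 ha' hb' hab
          · intro f hf
            rcases Finset.mem_insert.1 hf with rfl | hf'
            · exact fun h => hhe (h ▸ Finset.mem_insert_self _ _)
            · exact hg.2.2 f hf'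
        have hre : reached head v₀ (insert e F) = insert (head e) (reached head v₀ F) := by
          simp only [reached, Finset.image_insert]
          rw [Finset.insert_comm]
        have hcard' : Fintype.card V ≤ (reached head v₀ (insert e F)).card + j := by
          rw [hre, Finset.card_insert_of_notMem hhe]
          omega
        exact ih (insert e F) (Finset.insert_subset heS hFS) hgood' hcard'

theorem exists_arb (tail head : E → V) (v₀ : V) {S : Finset E}
    (hrc : RC tail head v₀ S) :
    ∃ F, F ⊆ S ∧ IsArborescence tail head F v₀ := by
  have hgE : good tail head v₀ (∅ : Finset E) := by
    refine ⟨fun e he => absurd he (Finset.notMem_empty e), ?_, fun e he => absurd he (Finset.notMem_empty e)⟩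
    simp [Set.InjOn]
  obtain ⟨F, hFS, hgood, hall⟩ := build tail head v₀ hrc (Fintype.card V) ∅
    (Finset.empty_subset S) hgE (by omega)
  refine ⟨F, hFS, fun v => reach_of_reached tail head v₀ hgood v (hall ▸ Finset.mem_univ v), ?_⟩
  have hv₀ : v₀ ∉ F.image head := by
    intro h
    obtain ⟨e, he, hev⟩ := Finset.mem_image.1 h
    exact hgood.2.2 e he hev
  have h1 : (reached head v₀ F).card = (F.image head).card + 1 :=
    Finset.card_insert_of_notMem hv₀
  have h2 : (F.image head).card = F.card := Finset.card_image_of_injOn hgood.2.1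
  rw [hall, Finset.card_univ] at h1
  omega

theorem filter_char (tail head : E → V) (v₀ : V) (X : Finset E) :
    (∃ F, IsArborescence tail head F v₀ ∧ Disjoint X F) ↔ RC tail head v₀ Xᶜ := by
  constructor
  · rintro ⟨F, ⟨hreach, _⟩, hdisj⟩ v
    refine reach_mono tail head ?_ (hreach v)
    intro e he
    rw [Finset.mem_compl]
    exact fun hX => (Finset.disjoint_left.1 hdisj) hX he
  · intro h
    obtain ⟨F, hFsub, harb⟩ := exists_arb tail head v₀ h
    exact ⟨F, harb, Finset.disjoint_left.2
      (fun {e} hX hF => Finset.mem_compl.1 (hFsub hF) hX)⟩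

theorem polyval (tail head : E → V) (v₀ : V) (f : ℕ → ℝ) :
    ∑ X ∈ Finset.univ.filter (fun X : Finset E => RC tail head v₀ Xᶜ), f X.card
    = ∑ k ∈ Finset.range (Fintype.card E + 1),
        (((Finset.powersetCard k (Finset.univ : Finset E)).filter
          (RC tail head v₀)).card : ℝ) * f (Fintype.card E - k) := by
  have stepA : ∑ X ∈ Finset.univ.filter (fun X : Finset E => RC tail head v₀ Xᶜ), f X.card
      = ∑ S ∈ Finset.univ.filter (RC tail head v₀), f (Fintype.card E - S.card) := by
    apply Finset.sum_nbij' (i := fun X => Xᶜ) (j := fun S => Sᶜ)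
    · intro X hX
      simp only [Finset.mem_filter, Finset.mem_univ, true_and] at hX ⊢
      exact hX
    · intro S hS
      simp only [Finset.mem_filter, Finset.mem_univ, true_and] at hS ⊢
      rwa [compl_compl]
    · intro X _
      exact compl_compl X
    · intro S _
      exact compl_compl S
    · intro X _
      congr 1
      rw [Finset.card_compl]
      have := Finset.card_le_univ X
      omega
  rw [stepA]
  rw [← Finset.sum_fiberwise_of_maps_to (g := Finset.card)
    (t := Finset.range (Fintype.card E + 1))
    (fun S _ => Finset.mem_range.2 (by
      have := Finset.card_le_univ S
      omega))]
  refine Finset.sum_congr rfl (fun k hk => ?_)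
  have hinner : ∑ S ∈ (Finset.univ.filter (RC tail head v₀)).filter (fun S => S.card = k),
      f (Fintype.card E - S.card)
      = ∑ S ∈ (Finset.univ.filter (RC tail head v₀)).filter (fun S => S.card = k),
        f (Fintype.card E - k) :=
    Finset.sum_congr rfl (fun S hS => by rw [(Finset.mem_filter.1 hS).2])
  rw [hinner, Finset.sum_const]
  have hsets : (Finset.univ.filter (RC tail head v₀)).filter (fun S => S.card = k)
      = (Finset.powersetCard k (Finset.univ : Finset E)).filter (RC tail head v₀) := by
    ext S
    simp only [Finset.mem_filter, Finset.mem_univ, true_and, Finset.mem_powersetCard,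
      Finset.subset_univ]
    tauto
  rw [hsets, nsmul_eq_mul]

theorem count_eq (tail head : E → V) (v₀ : V)
    (hEul : ∀ v : V, {e : E | head e = v}.ncard = {e : E | tail e = v}.ncard) (k : ℕ) :
    ((Finset.powersetCard k (Finset.univ : Finset E)).filter (RC tail head v₀)).card
    = ((Finset.powersetCard k (Finset.univ : Finset E)).filter (RC head tail v₀)).card := by
  have h1 := countL tail head v₀ k
  have h2 := countL head tail v₀ k
  have h3 := sum_dsc tail head v₀ hEul
    (fun d => (Nat.choose (Fintype.card E - d) k : ℤ))
  have : (((Finset.powersetCard k (Finset.univ : Finset E)).filter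
      (RC tail head v₀)).card : ℤ)
      = (((Finset.powersetCard k (Finset.univ : Finset E)).filter
      (RC head tail v₀)).card : ℤ) := by
    rw [h1, h2, h3]
  exact_mod_cast this

end GreedoidAux

/-- For a connected Eulerian digraph `G`, reversing the orientation of
every edge does not change the greedoid polynomial of the directed branching greedoid
rooted at any fixed vertex `v₀`. -/
theorem greedoid_polynomial_reversal_invariant [Fintype V] [Fintype E]
    (tail head : E → V)
    (hconn : ∀ u v : V, Relation.ReflTransGen
      (fun a b => ∃ e : E, (tail e = a ∧ head e = b) ∨ (tail e = b ∧ head e = a)) u v)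
    (hEul : ∀ v : V, {e : E | head e = v}.ncard = {e : E | tail e = v}.ncard)
    (v₀ : V) :
    ∀ x : ℝ, greedoidPolyEval tail head v₀ x = greedoidPolyEval head tail v₀ x := by
  classical
  intro x
  unfold greedoidPolyEval
  have hfG : (Finset.univ.filter
      (fun X : Finset E => ∃ F : Finset E, IsArborescence tail head F v₀ ∧ Disjoint X F))
      = Finset.univ.filter (fun X : Finset E => GreedoidAux.RC tail head v₀ Xᶜ) := by
    ext X
    simp only [Finset.mem_filter, Finset.mem_univ, true_and]
    exact GreedoidAux.filter_char tail head v₀ X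
  have hfG' : (Finset.univ.filter
      (fun X : Finset E => ∃ F : Finset E, IsArborescence head tail F v₀ ∧ Disjoint X F))
      = Finset.univ.filter (fun X : Finset E => GreedoidAux.RC head tail v₀ Xᶜ) := by
    ext X
    simp only [Finset.mem_filter, Finset.mem_univ, true_and]
    exact GreedoidAux.filter_char head tail v₀ X
  rw [hfG, hfG']
  rw [GreedoidAux.polyval tail head v₀
    (fun c => (x - 1) ^ (Fintype.card E + 1 - Fintype.card V - c))]
  rw [GreedoidAux.polyval head tail v₀
    (fun c => (x - 1) ^ (Fintype.card E + 1 - Fintype.card V - c))]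
  refine Finset.sum_congr rfl (fun k _ => ?_)
  rw [GreedoidAux.count_eq tail head v₀ hEul k]


end
end
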